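/- arXiv:1302.6745 — 6 statements merged into one kernel-verified Lean document; each statement's English description precedes it below -/
import Mathlib

section
/- Let N ∈ ℕ, let c : I → ℝ^N be a differentiable solution of the finite N-dimensional RBK system on an interval I, let (g_j)_{1≤j≤N} be any real sequence and let m ∈ {1,…,N}. Then for every t ∈ I: Σ_{j=m}^{N} g_j c_j'(t) = − Σ_{(j,k)∈T₁} (g_j − g_{j−k}) a_{j,k} c_j(t) c_k(t) − Σ_{(j,k)∈T₂} g_j a_{j,k} c_j(t) c_k(t), where T₁ = {(j,k) : m ≤ j ≤ N, 1 ≤ k ≤ N, k ≤ j−m} and T₂ = {(j,k) : m ≤ j ≤ N, 1 ≤ k ≤ N, k ≥ j−m+1}. -/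
/-!
STATEMENT 0: Weak (moment) form of the finite N-dimensional RBK system.
Indices j,k range over {1,…,N}.  For a differentiable solution `c` of the
finite RBK system on an interval `I`, any sequence `g` and any `m ∈ {1,…,N}`,
  Σ_{j=m}^{N} g_j c_j'(t)
    = − Σ_{(j,k)∈T₁} (g_j − g_{j−k}) a_{j,k} c_j c_k − Σ_{(j,k)∈T₂} g_j a_{j,k} c_j c_k,
where T₁ = {(j,k) : m ≤ j ≤ N, 1 ≤ k ≤ N, k ≤ j−m} and
      T₂ = {(j,k) : m ≤ j ≤ N, 1 ≤ k ≤ N, k ≥ j−m+1}.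
-/

theorem rbk_finite_moment_identity
    (a : ℕ → ℕ → ℝ)
    (hsym : ∀ j k : ℕ, 1 ≤ j → 1 ≤ k → a j k = a k j)
    (hpos : ∀ j k : ℕ, 1 ≤ j → 1 ≤ k → 0 ≤ a j k)
    (N : ℕ) (hN : 1 ≤ N)
    (I : Set ℝ) (hI : I.OrdConnected)
    (c : ℝ → ℕ → ℝ)
    (hode : ∀ j ∈ Finset.Icc 1 N, ∀ t ∈ I,
      HasDerivAt (fun s => c s j)
        ((∑ k ∈ Finset.Icc 1 (N - j), a (j + k) k * c t (j + k) * c t k) -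
         (∑ k ∈ Finset.Icc 1 N, a j k * c t j * c t k)) t)
    (g : ℕ → ℝ) (m : ℕ) (hm : 1 ≤ m) (hmN : m ≤ N)
    (t : ℝ) (ht : t ∈ I) :
    HasDerivAt (fun s => ∑ j ∈ Finset.Icc m N, g j * c s j)
      (-(∑ p ∈ (Finset.Icc m N ×ˢ Finset.Icc 1 N).filter (fun p => p.2 ≤ p.1 - m),
            (g p.1 - g (p.1 - p.2)) * (a p.1 p.2 * c t p.1 * c t p.2))
        - ∑ p ∈ (Finset.Icc m N ×ˢ Finset.Icc 1 N).filter (fun p => p.1 - m + 1 ≤ p.2),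
            g p.1 * (a p.1 p.2 * c t p.1 * c t p.2)) t := by
  classical
  have hderiv : HasDerivAt (fun s => ∑ j ∈ Finset.Icc m N, g j * c s j)
      (∑ j ∈ Finset.Icc m N, g j *
        ((∑ k ∈ Finset.Icc 1 (N - j), a (j + k) k * c t (j + k) * c t k) -
         (∑ k ∈ Finset.Icc 1 N, a j k * c t j * c t k))) t := by
    apply HasDerivAt.fun_sum
    intro j hj
    have hj' : j ∈ Finset.Icc 1 N := by
      simp only [Finset.mem_Icc] at hj ⊢; omega
    exact (hode j hj' t ht).const_mul (g j)
  have hgain : ∑ j ∈ Finset.Icc m N, ∑ k ∈ Finset.Icc 1 (N - j),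
        g j * (a (j + k) k * c t (j + k) * c t k)
      = ∑ p ∈ (Finset.Icc m N ×ˢ Finset.Icc 1 N).filter (fun p => p.2 ≤ p.1 - m),
        g (p.1 - p.2) * (a p.1 p.2 * c t p.1 * c t p.2) := by
    rw [Finset.sum_sigma']
    refine Finset.sum_nbij' (i := fun x => (x.1 + x.2, x.2))
      (j := fun p => ⟨p.1 - p.2, p.2⟩) ?_ ?_ ?_ ?_ ?_
    · intro x hx
      simp only [Finset.mem_sigma, Finset.mem_Icc] at hx
      simp only [Finset.mem_filter, Finset.mem_product, Finset.mem_Icc]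
      omega
    · intro p hp
      simp only [Finset.mem_filter, Finset.mem_product, Finset.mem_Icc] at hp
      simp only [Finset.mem_sigma, Finset.mem_Icc]
      omega
    · intro x hx
      simp only [Nat.add_sub_cancel]
    · intro p hp
      simp only [Finset.mem_filter, Finset.mem_product, Finset.mem_Icc] at hp
      have : p.1 - p.2 + p.2 = p.1 := by omega
      simp only [this]
    · intro x hx
      simp only [Nat.add_sub_cancel]
  have hloss : ∑ j ∈ Finset.Icc m N, ∑ k ∈ Finset.Icc 1 N,
        g j * (a j k * c t j * c t k)
      = (∑ p ∈ (Finset.Icc m N ×ˢ Finset.Icc 1 N).filter (fun p => p.2 ≤ p.1 - m),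
          g p.1 * (a p.1 p.2 * c t p.1 * c t p.2))
        + ∑ p ∈ (Finset.Icc m N ×ˢ Finset.Icc 1 N).filter (fun p => p.1 - m + 1 ≤ p.2),
          g p.1 * (a p.1 p.2 * c t p.1 * c t p.2) := by
    rw [← Finset.sum_product']
    rw [← Finset.sum_filter_add_sum_filter_not
      (Finset.Icc m N ×ˢ Finset.Icc 1 N) (fun p => p.2 ≤ p.1 - m)]
    congr 1
    apply Finset.sum_congr _ (fun _ _ => rfl)
    apply Finset.filter_congr
    intro p hp
    omega
  have hval : (-(∑ p ∈ (Finset.Icc m N ×ˢ Finset.Icc 1 N).filter (fun p => p.2 ≤ p.1 - m),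
            (g p.1 - g (p.1 - p.2)) * (a p.1 p.2 * c t p.1 * c t p.2))
        - ∑ p ∈ (Finset.Icc m N ×ˢ Finset.Icc 1 N).filter (fun p => p.1 - m + 1 ≤ p.2),
            g p.1 * (a p.1 p.2 * c t p.1 * c t p.2))
      = ∑ j ∈ Finset.Icc m N, g j *
        ((∑ k ∈ Finset.Icc 1 (N - j), a (j + k) k * c t (j + k) * c t k) -
         (∑ k ∈ Finset.Icc 1 N, a j k * c t j * c t k)) := by
    have hsplit : ∀ j ∈ Finset.Icc m N,
        g j * ((∑ k ∈ Finset.Icc 1 (N - j), a (j + k) k * c t (j + k) * c t k) -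
          (∑ k ∈ Finset.Icc 1 N, a j k * c t j * c t k))
        = (∑ k ∈ Finset.Icc 1 (N - j), g j * (a (j + k) k * c t (j + k) * c t k))
          - ∑ k ∈ Finset.Icc 1 N, g j * (a j k * c t j * c t k) := by
      intro j _
      rw [mul_sub, Finset.mul_sum, Finset.mul_sum]
    rw [Finset.sum_congr rfl hsplit, Finset.sum_sub_distrib, hgain, hloss]
    simp only [sub_mul, Finset.sum_sub_distrib]
    ring
  exact hval ▸ hderiv
end

section
/- Let N ∈ ℕ and let c₀ ∈ ℝ^N have all components nonnegative. Then there exists a continuously differentiable function c : [0,∞) → ℝ^N with c(0) = c₀ that satisfies the finite N-dimensional RBK system for all t ≥ 0 and moreover c_j(t) ≥ 0 for all j ∈ {1,…,N} and all t ≥ 0. -/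
open Set

namespace RBKaux

/-- clamp to `[0, S]` -/
noncomputable def clip (S y : ℝ) : ℝ := max 0 (min y S)

lemma clip_nonneg (S y : ℝ) : 0 ≤ clip S y := le_max_left _ _

lemma clip_le {S : ℝ} (hS : 0 ≤ S) (y : ℝ) : clip S y ≤ S :=
  max_le hS (min_le_right _ _)

lemma clip_abs_le {S : ℝ} (hS : 0 ≤ S) (y : ℝ) : |clip S y| ≤ S :=
  abs_le.2 ⟨by linarith [clip_nonneg S y], clip_le hS y⟩

lemma clip_eq {S y : ℝ} (h0 : 0 ≤ y) (h1 : y ≤ S) : clip S y = y := by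
  unfold clip; rw [min_eq_left h1, max_eq_right h0]

lemma clip_of_nonpos {S y : ℝ} (hS : 0 ≤ S) (h : y ≤ 0) : clip S y = 0 := by
  unfold clip
  rw [max_eq_left]
  exact le_trans (min_le_left _ _) h

lemma min_lip (S y z : ℝ) : |min y S - min z S| ≤ |y - z| := by
  have h1 := le_abs_self (y - z)
  have h2 := neg_abs_le (y - z)
  have h3 := abs_nonneg (y - z)
  rcases le_total y S with hy | hy <;> rcases le_total z S with hz | hz <;> rw [abs_le]
  · rw [min_eq_left hy, min_eq_left hz]; constructor <;> linarith
  · rw [min_eq_left hy, min_eq_right hz]; constructor <;> linarith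
  · rw [min_eq_right hy, min_eq_left hz]; constructor <;> linarith
  · rw [min_eq_right hy, min_eq_right hz]; constructor <;> linarith

lemma clip_lip (S y z : ℝ) : |clip S y - clip S z| ≤ |y - z| := by
  unfold clip
  have h1 : |max 0 (min y S) - max 0 (min z S)| ≤ |min y S - min z S| := by
    rw [max_comm 0 (min y S), max_comm 0 (min z S)]
    exact abs_max_sub_max_le_abs _ _ _
  exact h1.trans (min_lip S y z)

/-- coordinate extraction: component `m ∈ {1,…,N}` of a vector indexed by `Fin N`. -/
noncomputable def cf (N : ℕ) (x : Fin N → ℝ) (m : ℕ) : ℝ :=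
  if h : 1 ≤ m ∧ m ≤ N then x ⟨m - 1, by omega⟩ else 0

lemma cf_eq {N : ℕ} (x : Fin N → ℝ) {m : ℕ} (h1 : 1 ≤ m) (h2 : m ≤ N) (h3 : m - 1 < N) :
    cf N x m = x ⟨m - 1, h3⟩ := dif_pos ⟨h1, h2⟩

/-- the RBK right-hand side, coordinate `j`. -/
noncomputable def fld (a : ℕ → ℕ → ℝ) (N : ℕ) (y : ℕ → ℝ) (j : ℕ) : ℝ :=
  (∑ k ∈ Finset.Icc 1 (N - j), a (j + k) k * y (j + k) * y k) -
  (∑ k ∈ Finset.Icc 1 N, a j k * y j * y k)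

/-- the clipped vector field on `Fin N → ℝ`. -/
noncomputable def vf (a : ℕ → ℕ → ℝ) (N : ℕ) (S : ℝ) (x : Fin N → ℝ) (i : Fin N) : ℝ :=
  fld a N (fun m => clip S (cf N x m)) (i.1 + 1)

lemma prod_est {S d u v u' v' : ℝ} (hu : |u| ≤ S) (hv' : |v'| ≤ S)
    (h1 : |u - u'| ≤ d) (h2 : |v - v'| ≤ d) : |u * v - u' * v'| ≤ 2 * S * d := by
  have hS : 0 ≤ S := le_trans (abs_nonneg u) hu
  have hd : 0 ≤ d := le_trans (abs_nonneg (u - u')) h1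
  have he : u * v - u' * v' = u * (v - v') + (u - u') * v' := by ring
  rw [he]
  refine (abs_add_le _ _).trans ?_
  rw [abs_mul, abs_mul]
  have hA : |u| * |v - v'| ≤ S * d := mul_le_mul hu h2 (abs_nonneg _) hS
  have hB : |u - u'| * |v'| ≤ d * S := mul_le_mul h1 hv' (abs_nonneg _) hd
  linarith

section est

variable {a : ℕ → ℕ → ℝ} {N : ℕ} {A S : ℝ}

lemma fld_diff_bound
    (hpos : ∀ j k : ℕ, 1 ≤ j → 1 ≤ k → 0 ≤ a j k)
    (hA : ∀ j k : ℕ, 1 ≤ j → 1 ≤ k → j ≤ N → k ≤ N → a j k ≤ A)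
    (hA0 : 0 ≤ A) (hS : 0 ≤ S) {y z : ℕ → ℝ}
    (hy : ∀ m, |y m| ≤ S) (hz : ∀ m, |z m| ≤ S)
    {d : ℝ} (hd : 0 ≤ d) (hyz : ∀ m, |y m - z m| ≤ d)
    {j : ℕ} (hj1 : 1 ≤ j) (hj2 : j ≤ N) :
    |fld a N y j - fld a N z j| ≤ 4 * N * A * S * d := by
  have key : ∀ (s : Finset ℕ) (p q : ℕ → ℕ), s.card ≤ N →
      (∀ k ∈ s, 1 ≤ p k ∧ p k ≤ N ∧ 1 ≤ q k ∧ q k ≤ N) →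
      |(∑ k ∈ s, a (p k) (q k) * y (p k) * y (q k)) -
        ∑ k ∈ s, a (p k) (q k) * z (p k) * z (q k)| ≤ (N : ℝ) * (A * (2 * S * d)) := by
    intro s p q hcard hmem
    rw [← Finset.sum_sub_distrib]
    refine (Finset.abs_sum_le_sum_abs _ _).trans ?_
    have hterm : ∀ k ∈ s,
        |a (p k) (q k) * y (p k) * y (q k) - a (p k) (q k) * z (p k) * z (q k)|
          ≤ A * (2 * S * d) := by
      intro k hk
      obtain ⟨h1, h2, h3, h4⟩ := hmem k hk
      have heq : a (p k) (q k) * y (p k) * y (q k) - a (p k) (q k) * z (p k) * z (q k)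
          = a (p k) (q k) * (y (p k) * y (q k) - z (p k) * z (q k)) := by ring
      rw [heq, abs_mul, abs_of_nonneg (hpos _ _ h1 h3)]
      exact mul_le_mul (hA _ _ h1 h3 h2 h4)
        (prod_est (hy _) (hz _) (hyz _) (hyz _)) (abs_nonneg _) hA0
    refine le_trans (Finset.sum_le_card_nsmul s _ _ hterm) ?_
    rw [nsmul_eq_mul]
    have hc : (s.card : ℝ) ≤ N := by exact_mod_cast hcard
    have hnn : (0:ℝ) ≤ A * (2 * S * d) := by positivity
    nlinarith
  have h1 := key (Finset.Icc 1 (N - j)) (fun k => j + k) id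
    (by rw [Nat.card_Icc]; omega)
    (by intro k hk; rw [Finset.mem_Icc] at hk; simp only [id]; omega)
  have h2 := key (Finset.Icc 1 N) (fun _ => j) id
    (by rw [Nat.card_Icc]; omega)
    (by intro k hk; rw [Finset.mem_Icc] at hk; simp only [id]; omega)
  simp only [id] at h1 h2
  have hre : fld a N y j - fld a N z j =
      ((∑ k ∈ Finset.Icc 1 (N - j), a (j + k) k * y (j + k) * y k) -
        ∑ k ∈ Finset.Icc 1 (N - j), a (j + k) k * z (j + k) * z k) -
      ((∑ k ∈ Finset.Icc 1 N, a j k * y j * y k) -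
        ∑ k ∈ Finset.Icc 1 N, a j k * z j * z k) := by
    unfold fld; ring
  rw [hre]
  refine le_trans (abs_sub _ _) ?_
  have : (N:ℝ) * (A * (2 * S * d)) + (N:ℝ) * (A * (2 * S * d)) = 4 * N * A * S * d := by ring
  linarith [h1, h2]

lemma fld_nonneg_of_zero
    (hpos : ∀ j k : ℕ, 1 ≤ j → 1 ≤ k → 0 ≤ a j k)
    {y : ℕ → ℝ} (hy : ∀ m, 0 ≤ y m) {j : ℕ} (hj : 1 ≤ j) (hyj : y j = 0) :
    0 ≤ fld a N y j := by
  unfold fld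
  have hloss : ∑ k ∈ Finset.Icc 1 N, a j k * y j * y k = 0 :=
    Finset.sum_eq_zero fun k _ => by rw [hyj]; ring
  rw [hloss, sub_zero]
  refine Finset.sum_nonneg fun k hk => ?_
  rw [Finset.mem_Icc] at hk
  exact mul_nonneg (mul_nonneg (hpos (j + k) k (by omega) hk.1) (hy _)) (hy _)

lemma sum_fld_nonpos
    (hpos : ∀ j k : ℕ, 1 ≤ j → 1 ≤ k → 0 ≤ a j k)
    {y : ℕ → ℝ} (hy : ∀ m, 0 ≤ y m) :
    (∑ j ∈ Finset.Icc 1 N, fld a N y j) ≤ 0 := by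
  unfold fld
  rw [Finset.sum_sub_distrib, sub_nonpos]
  have hgain : (∑ j ∈ Finset.Icc 1 N, ∑ k ∈ Finset.Icc 1 (N - j),
        a (j + k) k * y (j + k) * y k)
      = ∑ p ∈ ((Finset.Icc 1 N) ×ˢ (Finset.Icc 1 N)).filter (fun p => p.2 < p.1),
          a p.1 p.2 * y p.1 * y p.2 := by
    rw [Finset.sum_sigma' (Finset.Icc 1 N) (fun j => Finset.Icc 1 (N - j))
      (fun j k => a (j + k) k * y (j + k) * y k)]
    refine Finset.sum_nbij' (fun p => (p.1 + p.2, p.2)) (fun p => ⟨p.1 - p.2, p.2⟩)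
      ?_ ?_ ?_ ?_ ?_
    · intro p hp
      simp only [Finset.mem_sigma, Finset.mem_Icc] at hp
      simp only [Finset.mem_filter, Finset.mem_product, Finset.mem_Icc]
      omega
    · intro p hp
      simp only [Finset.mem_filter, Finset.mem_product, Finset.mem_Icc] at hp
      simp only [Finset.mem_sigma, Finset.mem_Icc]
      omega
    · intro p hp
      simp only [Finset.mem_sigma, Finset.mem_Icc] at hp
      have : p.1 + p.2 - p.2 = p.1 := by omega
      simp [this]
    · intro p hp
      simp only [Finset.mem_filter, Finset.mem_product, Finset.mem_Icc] at hp
      have : p.1 - p.2 + p.2 = p.1 := by omega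
      simp [this]
    · intro p hp; rfl
  have hloss : (∑ j ∈ Finset.Icc 1 N, ∑ k ∈ Finset.Icc 1 N, a j k * y j * y k)
      = ∑ p ∈ (Finset.Icc 1 N) ×ˢ (Finset.Icc 1 N), a p.1 p.2 * y p.1 * y p.2 := by
    rw [Finset.sum_product]
  rw [hgain, hloss]
  refine Finset.sum_le_sum_of_subset_of_nonneg (Finset.filter_subset _ _) ?_
  intro p hp _
  simp only [Finset.mem_product, Finset.mem_Icc] at hp
  exact mul_nonneg (mul_nonneg (hpos _ _ hp.1.1 hp.2.1) (hy _)) (hy _)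

lemma vf_coord (a : ℕ → ℕ → ℝ) (N : ℕ) (S : ℝ) (x : Fin N → ℝ) {m : ℕ}
    (h1 : 1 ≤ m) (hm : m - 1 < N) :
    vf a N S x ⟨m - 1, hm⟩ = fld a N (fun k => clip S (cf N x k)) m := by
  unfold vf
  congr 1
  simp only []
  omega

end est

end RBKaux

open RBKaux in
theorem rbk_finite_global_existence
    (a : ℕ → ℕ → ℝ)
    (hsym : ∀ j k : ℕ, 1 ≤ j → 1 ≤ k → a j k = a k j)
    (hpos : ∀ j k : ℕ, 1 ≤ j → 1 ≤ k → 0 ≤ a j k)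
    (N : ℕ) (hN : 1 ≤ N)
    (c0 : ℕ → ℝ) (hc0 : ∀ j ∈ Finset.Icc 1 N, 0 ≤ c0 j) :
    ∃ c : ℝ → ℕ → ℝ,
      (∀ j ∈ Finset.Icc 1 N, c 0 j = c0 j) ∧
      (∀ j ∈ Finset.Icc 1 N, ∀ t : ℝ, 0 ≤ t →
        HasDerivWithinAt (fun s => c s j)
          ((∑ k ∈ Finset.Icc 1 (N - j), a (j + k) k * c t (j + k) * c t k) -
           (∑ k ∈ Finset.Icc 1 N, a j k * c t j * c t k)) (Set.Ici 0) t) ∧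
      (∀ j ∈ Finset.Icc 1 N,
        ContinuousOn (fun t =>
          (∑ k ∈ Finset.Icc 1 (N - j), a (j + k) k * c t (j + k) * c t k) -
          (∑ k ∈ Finset.Icc 1 N, a j k * c t j * c t k)) (Set.Ici 0)) ∧
      (∀ j ∈ Finset.Icc 1 N, ∀ t : ℝ, 0 ≤ t → 0 ≤ c t j) := by
  classical
  set S : ℝ := ∑ j ∈ Finset.Icc 1 N, c0 j with hSdef
  have hS : 0 ≤ S := Finset.sum_nonneg hc0
  set A : ℝ := ∑ p ∈ (Finset.Icc 1 N) ×ˢ (Finset.Icc 1 N), a p.1 p.2 with hAdef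
  have hApos : ∀ p ∈ (Finset.Icc 1 N) ×ˢ (Finset.Icc 1 N), 0 ≤ a p.1 p.2 := by
    intro p hp
    simp only [Finset.mem_product, Finset.mem_Icc] at hp
    exact hpos _ _ hp.1.1 hp.2.1
  have hA0 : 0 ≤ A := Finset.sum_nonneg hApos
  have hA : ∀ j k : ℕ, 1 ≤ j → 1 ≤ k → j ≤ N → k ≤ N → a j k ≤ A := by
    intro j k h1 h2 h3 h4
    rw [hAdef]
    refine Finset.single_le_sum (f := fun p : ℕ × ℕ => a p.1 p.2) hApos (a := (j, k)) ?_
    simp only [Finset.mem_product, Finset.mem_Icc]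
    exact ⟨⟨h1, h3⟩, ⟨h2, h4⟩⟩
  set x0 : Fin N → ℝ := fun i => c0 (i.1 + 1) with hx0def
  have hx00 : ∀ i, 0 ≤ x0 i := by
    intro i
    refine hc0 _ ?_
    simp only [Finset.mem_Icc]
    omega
  set B : ℝ := 4 * N * A * S with hBdef
  have hB0 : 0 ≤ B := by positivity
  set K : NNReal := Real.toNNReal B with hKdef
  -- boundedness of vf
  have hclipy : ∀ (x : Fin N → ℝ) (m : ℕ), |clip S (cf N x m)| ≤ S := fun x m => clip_abs_le hS _
  have hCb : ∀ x : Fin N → ℝ, ‖vf a N S x‖ ≤ B * S := by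
    intro x
    rw [pi_norm_le_iff_of_nonneg (by positivity)]
    intro i
    rw [Real.norm_eq_abs]
    have hz0 : ∀ m : ℕ, |(0:ℝ)| ≤ S := by intro m; simpa using hS
    have := fld_diff_bound (a := a) (N := N) hpos hA hA0 hS
      (y := fun m => clip S (cf N x m)) (z := fun _ => 0)
      (fun m => hclipy x m) hz0 hS
      (fun m => by simpa using hclipy x m)
      (j := i.1 + 1) (by omega) (by omega)
    have hfz : fld a N (fun _ => (0:ℝ)) (i.1 + 1) = 0 := by
      unfold fld
      simp
    rw [hfz, sub_zero] at this
    calc |vf a N S x i| = |fld a N (fun m => clip S (cf N x m)) (i.1 + 1)| := rfl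
      _ ≤ 4 * N * A * S * S := this
      _ = B * S := by rw [hBdef]
  -- Lipschitz property of vf
  have hlip : LipschitzWith K (vf a N S) := by
    refine LipschitzWith.of_dist_le_mul fun x x' => ?_
    have hd0 : (0:ℝ) ≤ dist x x' := dist_nonneg
    have hK : (K : ℝ) = B := Real.coe_toNNReal _ hB0
    rw [hK]
    refine (dist_pi_le_iff (by positivity)).2 fun i => ?_
    rw [Real.dist_eq]
    have hyz : ∀ m, |clip S (cf N x m) - clip S (cf N x' m)| ≤ dist x x' := by
      intro m
      refine (clip_lip S _ _).trans ?_
      by_cases h : 1 ≤ m ∧ m ≤ N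
      · have h3 : m - 1 < N := by omega
        rw [cf_eq x h.1 h.2 h3, cf_eq x' h.1 h.2 h3, ← Real.dist_eq]
        exact dist_le_pi_dist x x' _
      · simp only [cf, dif_neg h]
        simpa using hd0
    have := fld_diff_bound (a := a) (N := N) hpos hA hA0 hS
      (y := fun m => clip S (cf N x m)) (z := fun m => clip S (cf N x' m))
      (fun m => hclipy x m) (fun m => hclipy x' m) hd0 hyz
      (j := i.1 + 1) (by omega) (by omega)
    calc |vf a N S x i - vf a N S x' i|
        = |fld a N (fun m => clip S (cf N x m)) (i.1 + 1) -
            fld a N (fun m => clip S (cf N x' m)) (i.1 + 1)| := rfl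
      _ ≤ 4 * N * A * S * dist x x' := this
      _ = B * dist x x' := by rw [hBdef]
  -- local-in-time solutions on [0, n]
  have hex : ∀ n : ℕ, ∃ f : ℝ → Fin N → ℝ, f 0 = x0 ∧
      ∀ t ∈ Set.Icc (0:ℝ) n, HasDerivAt f (vf a N S (f t)) t := by
    intro n
    set T : ℝ := (n : ℝ) + 1 with hTdef
    have hT0 : 0 < T := by positivity
    have hpl : IsPicardLindelof (fun _ x => vf a N S x) (tmin := -T) (tmax := T)
        ⟨0, ⟨by linarith, by linarith⟩⟩ x0
        ⟨B * S * T + 1, by nlinarith [mul_nonneg (mul_nonneg hB0 hS) hT0.le]⟩ 0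
        ⟨B * S, mul_nonneg hB0 hS⟩ K :=
      { lipschitzOnWith := fun t _ => (lipschitzOnWith_univ.2 hlip).mono (Set.subset_univ _)
        continuousOn := fun x _ => continuousOn_const
        norm_le := fun t _ x _ => hCb x
        mul_max_le := by
          show (B * S) * max (T - 0) (0 - -T) ≤ (B * S * T + 1) - 0
          rw [sub_zero, zero_sub, neg_neg, max_self, sub_zero]
          nlinarith [mul_nonneg (mul_nonneg hB0 hS) hT0.le] }
    obtain ⟨f, hf0, hf⟩ := hpl.exists_eq_forall_mem_Icc_hasDerivWithinAt₀
    refine ⟨f, hf0, fun t ht => ?_⟩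
    have h1 : t ∈ Set.Ioo (-T) T := ⟨by linarith [ht.1], by
      have := ht.2
      rw [hTdef]; linarith⟩
    exact (hf t (Set.Ioo_subset_Icc_self h1)).hasDerivAt (Icc_mem_nhds h1.1 h1.2)
  choose f hf0 hfd using hex
  -- agreement of solutions by uniqueness
  have agree : ∀ n m : ℕ, ∀ s : ℝ, 0 ≤ s → s ≤ n → s ≤ m → f n s = f m s := by
    intro n m s hs hsn hsm
    have hcont : ∀ p : ℕ, s ≤ p → ContinuousOn (f p) (Set.Icc 0 s) := by
      intro p hp
      intro t ht
      exact ((hfd p t ⟨ht.1, le_trans ht.2 hp⟩).continuousAt).continuousWithinAt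
    have hderiv : ∀ p : ℕ, s ≤ p → ∀ t ∈ Set.Ico (0:ℝ) s,
        HasDerivWithinAt (f p) (vf a N S (f p t)) (Set.Ici t) t := by
      intro p hp t ht
      exact (hfd p t ⟨ht.1, le_trans ht.2.le hp⟩).hasDerivWithinAt
    have := ODE_solution_unique (v := fun _ x => vf a N S x) (K := K)
      (fun _ => hlip) (hcont n hsn) (hderiv n hsn) (hcont m hsm) (hderiv m hsm)
      (by rw [hf0, hf0])
    exact this ⟨hs, le_rfl⟩
  set α : ℝ → Fin N → ℝ := fun t => f (⌈t⌉₊ + 1) t with hαdef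
  have hceil : ∀ t : ℝ, 0 ≤ t → t ≤ (⌈t⌉₊ + 1 : ℕ) := by
    intro t ht
    push_cast
    have := Nat.le_ceil t
    linarith
  have hαeq : ∀ n : ℕ, ∀ s : ℝ, 0 ≤ s → s ≤ n → α s = f n s := by
    intro n s hs hsn
    exact agree _ n s hs (hceil s hs) hsn
  have hα0 : α 0 = x0 := by
    rw [hαeq 1 0 le_rfl (by norm_num), hf0]
  have hαdW : ∀ t : ℝ, 0 ≤ t → HasDerivWithinAt α (vf a N S (α t)) (Set.Ici 0) t := by
    intro t ht
    set n : ℕ := ⌈t⌉₊ + 1 with hndef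
    have htn : t < n := by
      have := Nat.le_ceil t
      push_cast [hndef]
      linarith
    have hder := hfd n t ⟨ht, htn.le⟩
    have hval : α t = f n t := hαeq n t ht htn.le
    have hev : α =ᶠ[nhdsWithin t (Set.Ici 0)] f n := by
      have hio : Set.Iio (n : ℝ) ∈ nhdsWithin t (Set.Ici 0) :=
        nhdsWithin_le_nhds (Iio_mem_nhds htn)
      filter_upwards [hio, self_mem_nhdsWithin] with s hs1 hs2
      exact hαeq n s hs2 hs1.le
    rw [show vf a N S (α t) = vf a N S (f n t) by rw [hval]]
    exact hder.hasDerivWithinAt.congr_of_eventuallyEq hev hval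
  have hαdA : ∀ t : ℝ, 0 < t → HasDerivAt α (vf a N S (α t)) t := fun t ht =>
    (hαdW t ht.le).hasDerivAt (Ici_mem_nhds ht)
  have hαc : ContinuousOn α (Set.Ici 0) := fun t ht => (hαdW t ht).continuousWithinAt
  -- coordinate derivatives
  have coordA : ∀ (i : Fin N) (t : ℝ), 0 < t →
      HasDerivAt (fun s => α s i) (vf a N S (α t) i) t := by
    intro i t ht
    have h := (ContinuousLinearMap.proj (R := ℝ) (φ := fun _ : Fin N => ℝ)
      i).hasFDerivAt.comp_hasDerivAt t (hαdA t ht)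
    exact h
  have coordW : ∀ (i : Fin N) (t : ℝ), 0 ≤ t →
      HasDerivWithinAt (fun s => α s i) (vf a N S (α t) i) (Set.Ici 0) t := by
    intro i t ht
    have h := (ContinuousLinearMap.proj (R := ℝ) (φ := fun _ : Fin N => ℝ)
      i).hasFDerivAt.comp_hasDerivWithinAt t (hαdW t ht)
    exact h
  -- nonnegativity of every coordinate
  have hnn : ∀ t : ℝ, 0 ≤ t → ∀ i : Fin N, 0 ≤ α t i := by
    by_contra hcon
    push_neg at hcon
    obtain ⟨t0, ht0, i, hi⟩ := hcon
    set g : ℝ → ℝ := fun s => α s i with hgdef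
    have hgc : ContinuousOn g (Set.Icc 0 t0) :=
      (continuous_apply i).comp_continuousOn (hαc.mono Set.Icc_subset_Ici_self)
    set Aset : Set ℝ := Set.Icc 0 t0 ∩ g ⁻¹' (Set.Ici 0) with hAsetdef
    have hA0mem : (0:ℝ) ∈ Aset := by
      constructor
      · exact ⟨le_rfl, ht0⟩
      · show (0:ℝ) ≤ g 0
        rw [hgdef]
        simpa [hα0] using hx00 i
    have hclosed : IsClosed Aset :=
      hgc.preimage_isClosed_of_isClosed isClosed_Icc isClosed_Ici
    have hcpt : IsCompact Aset :=
      isCompact_Icc.of_isClosed_subset hclosed Set.inter_subset_left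
    set s0 : ℝ := sSup Aset with hs0def
    have hmem : s0 ∈ Aset := hcpt.sSup_mem ⟨0, hA0mem⟩
    obtain ⟨⟨hs00, hst0⟩, hgs⟩ := hmem
    have hgs : 0 ≤ g s0 := hgs
    have hlt : s0 < t0 := by
      rcases lt_or_eq_of_le hst0 with h | h
      · exact h
      · exfalso; rw [h] at hgs; exact absurd hgs (not_le.2 hi)
    have hneg : ∀ s ∈ Set.Ioo s0 t0, g s < 0 := by
      intro s hs
      by_contra h
      push_neg at h
      have hsA : s ∈ Aset := ⟨⟨le_trans hs00 hs.1.le, hs.2.le⟩, h⟩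
      exact absurd (le_csSup hcpt.bddAbove hsA) (not_le.2 hs.1)
    have hmono : MonotoneOn g (Set.Icc s0 t0) := by
      have hderiv : ∀ s ∈ Set.Ioo s0 t0, HasDerivAt g (vf a N S (α s) i) s := by
        intro s hs
        exact coordA i s (lt_of_le_of_lt hs00 hs.1)
      refine monotoneOn_of_deriv_nonneg (convex_Icc _ _)
        (hgc.mono (Set.Icc_subset_Icc_left hs00)) ?_ ?_
      · rw [interior_Icc]
        intro s hs
        exact ((hderiv s hs).differentiableAt).differentiableWithinAt
      · rw [interior_Icc]
        intro s hs
        rw [(hderiv s hs).deriv]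
        have hgz : g s < 0 := hneg s hs
        have hclip0 : clip S (cf N (α s) (i.1 + 1)) = 0 := by
          have h3 : i.1 + 1 - 1 < N := by omega
          rw [cf_eq (α s) (by omega) (by omega) h3]
          have : (⟨i.1 + 1 - 1, h3⟩ : Fin N) = i := by
            apply Fin.ext
            simp
          rw [this]
          exact clip_of_nonpos hS hgz.le
        have := fld_nonneg_of_zero (a := a) (N := N) hpos
          (y := fun m => clip S (cf N (α s) m)) (fun m => clip_nonneg _ _)
          (j := i.1 + 1) (by omega) hclip0
        exact this
    have : g s0 ≤ g t0 := hmono ⟨le_rfl, hlt.le⟩ ⟨hlt.le, le_rfl⟩ hlt.le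
    have : (0:ℝ) ≤ g t0 := le_trans hgs this
    exact absurd this (not_le.2 hi)
  have hcf_nonneg : ∀ t : ℝ, 0 ≤ t → ∀ m : ℕ, 0 ≤ cf N (α t) m := by
    intro t ht m
    by_cases h : 1 ≤ m ∧ m ≤ N
    · rw [cf_eq (α t) h.1 h.2 (by omega)]
      exact hnn t ht _
    · unfold cf; rw [dif_neg h]
  -- sum bound
  have hub : ∀ t : ℝ, 0 ≤ t → (∑ m ∈ Finset.Icc 1 N, cf N (α t) m) ≤ S := by
    intro t ht
    set σ : ℝ → ℝ := fun s => ∑ m ∈ Finset.Icc 1 N, cf N (α s) m with hσdef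
    have hσ0 : σ 0 = S := by
      rw [hσdef, hSdef]
      refine Finset.sum_congr rfl fun m hm => ?_
      rw [Finset.mem_Icc] at hm
      rw [cf_eq _ hm.1 hm.2 (by omega), hα0, hx0def]
      simp only []
      congr 1
      omega
    have hcont : ContinuousOn σ (Set.Icc 0 t) := by
      refine continuousOn_finset_sum _ fun m hm => ?_
      rw [Finset.mem_Icc] at hm
      have : (fun s => cf N (α s) m) = fun s => α s ⟨m - 1, by omega⟩ :=
        funext fun s => cf_eq _ hm.1 hm.2 _
      rw [this]
      exact (continuous_apply _).comp_continuousOn (hαc.mono Set.Icc_subset_Ici_self)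
    have hderiv : ∀ s ∈ Set.Ioo (0:ℝ) t, HasDerivAt σ
        (∑ m ∈ Finset.Icc 1 N, fld a N (fun k => clip S (cf N (α s) k)) m) s := by
      intro s hs
      refine HasDerivAt.fun_sum fun m hm => ?_
      rw [Finset.mem_Icc] at hm
      have h3 : m - 1 < N := by omega
      have hc := coordA ⟨m - 1, h3⟩ s hs.1
      have hval : vf a N S (α s) ⟨m - 1, h3⟩
          = fld a N (fun k => clip S (cf N (α s) k)) m := vf_coord a N S _ hm.1 h3
      rw [hval] at hc
      have hfun : (fun sσ => α sσ (⟨m - 1, h3⟩ : Fin N)) = fun sσ => cf N (α sσ) m :=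
        funext fun sσ => (cf_eq _ hm.1 hm.2 h3).symm
      rw [hfun] at hc
      exact hc
    have hanti : AntitoneOn σ (Set.Icc 0 t) := by
      refine antitoneOn_of_deriv_nonpos (convex_Icc _ _) hcont ?_ ?_
      · rw [interior_Icc]
        intro s hs
        exact ((hderiv s hs).differentiableAt).differentiableWithinAt
      · rw [interior_Icc]
        intro s hs
        rw [(hderiv s hs).deriv]
        exact sum_fld_nonpos (a := a) (N := N) hpos fun m => clip_nonneg _ _
    have : σ t ≤ σ 0 := hanti ⟨le_rfl, ht⟩ ⟨ht, le_rfl⟩ ht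
    rw [hσ0] at this
    exact this
  have hub1 : ∀ (m : ℕ), 1 ≤ m → m ≤ N → ∀ t : ℝ, 0 ≤ t → cf N (α t) m ≤ S := by
    intro m h1 h2 t ht
    have hmem : m ∈ Finset.Icc 1 N := by rw [Finset.mem_Icc]; exact ⟨h1, h2⟩
    calc cf N (α t) m ≤ ∑ k ∈ Finset.Icc 1 N, cf N (α t) k :=
          Finset.single_le_sum (fun k _ => hcf_nonneg t ht k) hmem
      _ ≤ S := hub t ht
  have hclip_id : ∀ t : ℝ, 0 ≤ t →
      (fun k => clip S (cf N (α t) k)) = fun k => cf N (α t) k := by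
    intro t ht
    funext k
    refine clip_eq (hcf_nonneg t ht k) ?_
    by_cases h : 1 ≤ k ∧ k ≤ N
    · exact hub1 k h.1 h.2 t ht
    · unfold cf; rw [dif_neg h]; exact hS
  -- conclusion
  refine ⟨fun t m => cf N (α t) m, ?_, ?_, ?_, ?_⟩
  · intro j hj
    rw [Finset.mem_Icc] at hj
    show cf N (α 0) j = c0 j
    rw [cf_eq _ hj.1 hj.2 (by omega), hα0, hx0def]
    show c0 (j - 1 + 1) = c0 j
    congr 1
    omega
  · intro j hj t ht
    rw [Finset.mem_Icc] at hj
    have h3 : j - 1 < N := by omega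
    have hc := coordW ⟨j - 1, h3⟩ t ht
    have hval : vf a N S (α t) ⟨j - 1, h3⟩
        = fld a N (fun k => clip S (cf N (α t) k)) j := vf_coord a N S _ hj.1 h3
    rw [hval, hclip_id t ht] at hc
    have hfun : (fun s => α s (⟨j - 1, h3⟩ : Fin N)) = fun s => cf N (α s) j :=
      funext fun s => (cf_eq _ hj.1 hj.2 h3).symm
    rw [hfun] at hc
    exact hc
  · intro j hj
    have hcoordCont : ∀ m : ℕ, ContinuousOn (fun s => cf N (α s) m) (Set.Ici 0) := by
      intro m
      by_cases h : 1 ≤ m ∧ m ≤ N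
      · have : (fun s => cf N (α s) m) = fun s => α s ⟨m - 1, by omega⟩ :=
          funext fun s => cf_eq _ h.1 h.2 _
        rw [this]
        exact (continuous_apply _).comp_continuousOn hαc
      · have : (fun s => cf N (α s) m) = fun _ => 0 := funext fun s => dif_neg h
        rw [this]
        exact continuousOn_const
    refine ContinuousOn.sub ?_ ?_
    · refine continuousOn_finset_sum _ fun k _ => ?_
      exact (continuousOn_const.mul (hcoordCont _)).mul (hcoordCont _)
    · refine continuousOn_finset_sum _ fun k _ => ?_
      exact (continuousOn_const.mul (hcoordCont _)).mul (hcoordCont _)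
  · intro j hj t ht
    exact hcf_nonneg t ht j
end

section
/- Assume a_{j,k} ≤ K·j·k for some constant K > 0 and all j,k ∈ ℕ. Then every mild solution c of the RBK system on [0,T) is density nonincreasing, i.e. Σ_{j≥1} j c_j(t₂) ≤ Σ_{j≥1} j c_j(t₁) whenever 0 ≤ t₁ ≤ t₂ < T. -/
open MeasureTheory Filter Topology
open scoped ENNReal

/-- Membership in `X₁⁺`: sequences `(c_j)_{j≥1}` (encoded as `c (j+1)` for `j : ℕ`)
with nonnegative entries and `Σ_{j≥1} j c_j < ∞`. -/
def MemX1plus (c : ℕ → ℝ) : Prop :=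
  (∀ j : ℕ, 0 ≤ c (j + 1)) ∧ Summable (fun j : ℕ => ((j : ℝ) + 1) * c (j + 1))

/-- The norm `‖c‖₁ = Σ_{j≥1} j c_j`. -/
noncomputable def norm1 (c : ℕ → ℝ) : ℝ := ∑' j : ℕ, ((j : ℝ) + 1) * c (j + 1)

/-- A (mild) solution of the RBK coagulation system on `[0,T)`, `T ∈ (0,∞]`:
(i) each `c_j` is continuous, `c(t) ∈ X₁⁺` and `sup_t ‖c(t)‖₁ < ∞`;
(ii) for each `j` the loss series is summable and `∫₀ᵗ Σ_k a_{j,k} c_k < ∞`;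
(iii) `c_j(t) = c_j(0) + ∫₀ᵗ [Σ_k a_{j+k,k} c_{j+k} c_k − Σ_k a_{j,k} c_j c_k] ds`. -/
structure IsMildSolution (a : ℕ → ℕ → ℝ) (T : ℝ≥0∞) (c : ℝ → ℕ → ℝ) : Prop where
  mem : ∀ t : ℝ, 0 ≤ t → ENNReal.ofReal t < T → MemX1plus (c t)
  cont : ∀ j : ℕ, ContinuousOn (fun t => c t (j + 1))
      {t : ℝ | 0 ≤ t ∧ ENNReal.ofReal t < T}
  bdd : ∃ B : ℝ, ∀ t : ℝ, 0 ≤ t → ENNReal.ofReal t < T → norm1 (c t) ≤ B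
  loss_summable : ∀ (j : ℕ) (s : ℝ), 0 ≤ s → ENNReal.ofReal s < T →
      Summable (fun k : ℕ => a (j + 1) (k + 1) * c s (k + 1))
  loss_integrable : ∀ (j : ℕ) (t : ℝ), 0 ≤ t → ENNReal.ofReal t < T →
      IntervalIntegrable (fun s => ∑' k : ℕ, a (j + 1) (k + 1) * c s (k + 1)) volume 0 t
  eqn : ∀ (j : ℕ) (t : ℝ), 0 ≤ t → ENNReal.ofReal t < T →
      c t (j + 1) = c 0 (j + 1) + ∫ s in (0:ℝ)..t,
        ((∑' k : ℕ, a (j + 1 + (k + 1)) (k + 1) * c s (j + 1 + (k + 1)) * c s (k + 1)) -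
         (∑' k : ℕ, a (j + 1) (k + 1) * c s (j + 1) * c s (k + 1)))

/-- Key rearrangement inequality in `ℝ≥0∞`: the gain sum, reindexed by
`(j,k) ↦ (j+k+1, k)`, is dominated by the loss sum when the weight `W` is
nondecreasing along `j ↦ j + k + 1`. -/
lemma rbk_rearrange (W : ℕ → ℝ≥0∞) (u : ℕ → ℕ → ℝ≥0∞)
    (hW : ∀ j k : ℕ, W j ≤ W (j + k + 1)) :
    ∑' (j : ℕ) (k : ℕ), W j * u (j + k + 1) k ≤ ∑' (j : ℕ) (k : ℕ), W j * u j k := by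
  have h1 : ∑' (j : ℕ) (k : ℕ), W j * u (j + k + 1) k
      ≤ ∑' (j : ℕ) (k : ℕ), W (j + k + 1) * u (j + k + 1) k :=
    ENNReal.tsum_le_tsum fun j => ENNReal.tsum_le_tsum fun k =>
      mul_le_mul_left (hW j k) _
  refine h1.trans ?_
  rw [← ENNReal.tsum_prod' (f := fun p : ℕ × ℕ => W (p.1 + p.2 + 1) * u (p.1 + p.2 + 1) p.2),
    ← ENNReal.tsum_prod' (f := fun p : ℕ × ℕ => W p.1 * u p.1 p.2)]
  have hinj : Function.Injective (fun p : ℕ × ℕ => ((p.1 + p.2 + 1, p.2) : ℕ × ℕ)) := by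
    intro p q h
    simp only [Prod.mk.injEq] at h
    obtain ⟨h1', h2'⟩ := h
    ext
    · omega
    · exact h2'
  exact Summable.tsum_le_tsum_of_inj _ hinj (fun _ _ => zero_le) (fun p => le_rfl)
    ENNReal.summable ENNReal.summable

/-- for `a_{j,k} ≤ K j k`, every mild solution on `[0,T)` is
density nonincreasing: `‖c(t₂)‖₁ ≤ ‖c(t₁)‖₁` for `0 ≤ t₁ ≤ t₂ < T`. -/
theorem rbk_density_nonincreasing
    (a : ℕ → ℕ → ℝ) (K : ℝ) (hK : 0 < K)
    (hsym : ∀ j k : ℕ, a (j + 1) (k + 1) = a (k + 1) (j + 1))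
    (hpos : ∀ j k : ℕ, 0 ≤ a (j + 1) (k + 1))
    (hbound : ∀ j k : ℕ, a (j + 1) (k + 1) ≤ K * ((j : ℝ) + 1) * ((k : ℝ) + 1))
    (T : ℝ≥0∞) (c : ℝ → ℕ → ℝ) (hc : IsMildSolution a T c)
    (t₁ t₂ : ℝ) (h₁ : 0 ≤ t₁) (h₁₂ : t₁ ≤ t₂) (h₂ : ENNReal.ofReal t₂ < T) :
    norm1 (c t₂) ≤ norm1 (c t₁) := by
  have h20 : (0:ℝ) ≤ t₂ := h₁.trans h₁₂
  -- domain facts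
  have hdomT : ∀ s : ℝ, s ≤ t₂ → ENNReal.ofReal s < T := fun s hst =>
    lt_of_le_of_lt (ENNReal.ofReal_le_ofReal hst) h₂
  -- the uniform bound, made nonnegative
  obtain ⟨B₀, hB₀⟩ := hc.bdd
  set B : ℝ := max B₀ 0 with hBdef
  have hB : ∀ s : ℝ, 0 ≤ s → s ≤ t₂ → norm1 (c s) ≤ B := fun s hs hst =>
    (hB₀ s hs (hdomT s hst)).trans (le_max_left _ _)
  have hB0 : 0 ≤ B := le_max_right _ _
  -- pointwise facts
  have hnn : ∀ s : ℝ, 0 ≤ s → s ≤ t₂ → ∀ j : ℕ, 0 ≤ c s (j + 1) := fun s hs hst =>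
    (hc.mem s hs (hdomT s hst)).1
  have hsum1 : ∀ s : ℝ, 0 ≤ s → s ≤ t₂ →
      Summable (fun j : ℕ => ((j : ℝ) + 1) * c s (j + 1)) := fun s hs hst =>
    (hc.mem s hs (hdomT s hst)).2
  have hterm : ∀ s : ℝ, 0 ≤ s → s ≤ t₂ → ∀ m : ℕ, ((m : ℝ) + 1) * c s (m + 1) ≤ B := by
    intro s hs hst m
    refine le_trans (Summable.le_tsum (hsum1 s hs hst) m fun k _ => ?_) (hB s hs hst)
    exact mul_nonneg (by positivity) (hnn s hs hst k)
  -- abbreviations for the loss kernel sum, gain term and loss term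
  set L : ℕ → ℝ → ℝ := fun j s => ∑' k : ℕ, a (j + 1) (k + 1) * c s (k + 1) with hLdef
  set gl : ℕ → ℝ → ℝ := fun j s =>
      ∑' k : ℕ, a (j + 1 + (k + 1)) (k + 1) * c s (j + 1 + (k + 1)) * c s (k + 1) with hgldef
  set ll : ℕ → ℝ → ℝ := fun j s =>
      ∑' k : ℕ, a (j + 1) (k + 1) * c s (j + 1) * c s (k + 1) with hlldef
  have hnorm1nn : ∀ s : ℝ, 0 ≤ s → s ≤ t₂ → 0 ≤ norm1 (c s) := by
    intro s hs hst
    exact tsum_nonneg fun j => mul_nonneg (by positivity) (hnn s hs hst j)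
  have hLle : ∀ (j : ℕ) (s : ℝ), 0 ≤ s → s ≤ t₂ → L j s ≤ K * ((j:ℝ)+1) * B := by
    intro j s hs hst
    have h1 : L j s ≤ ∑' k : ℕ, K * ((j:ℝ)+1) * (((k:ℝ)+1) * c s (k+1)) := by
      refine Summable.tsum_le_tsum (fun k => ?_) (hc.loss_summable j s hs (hdomT s hst))
        (((hsum1 s hs hst).mul_left _))
      have := mul_le_mul_of_nonneg_right (hbound j k) (hnn s hs hst k)
      calc a (j+1) (k+1) * c s (k+1) ≤ K * ((j:ℝ)+1) * ((k:ℝ)+1) * c s (k+1) := this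
        _ = K * ((j:ℝ)+1) * (((k:ℝ)+1) * c s (k+1)) := by ring
    rw [tsum_mul_left] at h1
    refine h1.trans ?_
    have : (0:ℝ) ≤ K * ((j:ℝ)+1) := by positivity
    exact mul_le_mul_of_nonneg_left (hB s hs hst) this
  have hLnn : ∀ (j : ℕ) (s : ℝ), 0 ≤ s → s ≤ t₂ → 0 ≤ L j s := by
    intro j s hs hst
    exact tsum_nonneg fun k => mul_nonneg (hpos j k) (hnn s hs hst k)
  -- loss term: summability, identity, bounds
  have hllsummable : ∀ (j : ℕ) (s : ℝ), 0 ≤ s → s ≤ t₂ →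
      Summable (fun k : ℕ => a (j+1) (k+1) * c s (j+1) * c s (k+1)) := by
    intro j s hs hst
    refine ((hc.loss_summable j s hs (hdomT s hst)).mul_left (c s (j+1))).congr fun k => ?_
    ring
  have hlleq : ∀ (j : ℕ) (s : ℝ), ll j s = c s (j+1) * L j s := by
    intro j s
    simp only [hlldef, hLdef]
    rw [← tsum_mul_left]
    exact tsum_congr fun k => by ring
  have hllnn : ∀ (j : ℕ) (s : ℝ), 0 ≤ s → s ≤ t₂ → 0 ≤ ll j s := by
    intro j s hs hst
    exact tsum_nonneg fun k =>
      mul_nonneg (mul_nonneg (hpos j k) (hnn s hs hst j)) (hnn s hs hst k)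
  have hllle : ∀ (j : ℕ) (s : ℝ), 0 ≤ s → s ≤ t₂ →
      ll j s ≤ K * B * (((j:ℝ)+1) * c s (j+1)) := by
    intro j s hs hst
    rw [hlleq]
    calc c s (j+1) * L j s ≤ c s (j+1) * (K * ((j:ℝ)+1) * B) :=
          mul_le_mul_of_nonneg_left (hLle j s hs hst) (hnn s hs hst j)
      _ = K * B * (((j:ℝ)+1) * c s (j+1)) := by ring
  -- gain term: bounds and summability
  have hgterm : ∀ (j : ℕ) (s : ℝ), 0 ≤ s → s ≤ t₂ → ∀ k : ℕ,
      a (j + 1 + (k + 1)) (k + 1) * c s (j + 1 + (k + 1)) * c s (k + 1)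
        ≤ K * B * (((k:ℝ)+1) * c s (k+1)) := by
    intro j s hs hst k
    have hidx : j + 1 + (k + 1) = (j + k + 1) + 1 := by omega
    rw [hidx]
    have hb := hbound (j + k + 1) k
    have hcm := hnn s hs hst (j + k + 1)
    have hck := hnn s hs hst k
    have htm := hterm s hs hst (j + k + 1)
    have h1 : a ((j+k+1)+1) (k+1) * c s ((j+k+1)+1) * c s (k+1)
        ≤ (K * (((j+k+1:ℕ):ℝ)+1) * ((k:ℝ)+1)) * c s ((j+k+1)+1) * c s (k+1) := by
      apply mul_le_mul_of_nonneg_right _ hck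
      exact mul_le_mul_of_nonneg_right hb hcm
    refine h1.trans ?_
    have h2 : (K * (((j+k+1:ℕ):ℝ)+1) * ((k:ℝ)+1)) * c s ((j+k+1)+1) * c s (k+1)
        = K * ((((j+k+1:ℕ):ℝ)+1) * c s ((j+k+1)+1)) * (((k:ℝ)+1) * c s (k+1)) := by ring
    rw [h2]
    have h3 : K * ((((j+k+1:ℕ):ℝ)+1) * c s ((j+k+1)+1)) ≤ K * B :=
      mul_le_mul_of_nonneg_left htm (le_of_lt hK)
    exact mul_le_mul_of_nonneg_right h3 (mul_nonneg (by positivity) hck)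
  have hgnnterm : ∀ (j : ℕ) (s : ℝ), 0 ≤ s → s ≤ t₂ → ∀ k : ℕ,
      0 ≤ a (j + 1 + (k + 1)) (k + 1) * c s (j + 1 + (k + 1)) * c s (k + 1) := by
    intro j s hs hst k
    have hidx : j + 1 + (k + 1) = (j + k + 1) + 1 := by omega
    rw [hidx]
    exact mul_nonneg (mul_nonneg (hpos (j+k+1) k) (hnn s hs hst (j+k+1))) (hnn s hs hst k)
  have hgsummable : ∀ (j : ℕ) (s : ℝ), 0 ≤ s → s ≤ t₂ →
      Summable (fun k : ℕ => a (j + 1 + (k + 1)) (k + 1) * c s (j + 1 + (k + 1)) * c s (k + 1)) := by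
    intro j s hs hst
    exact Summable.of_nonneg_of_le (hgnnterm j s hs hst) (hgterm j s hs hst)
      ((hsum1 s hs hst).mul_left (K * B))
  have hglnn : ∀ (j : ℕ) (s : ℝ), 0 ≤ s → s ≤ t₂ → 0 ≤ gl j s := by
    intro j s hs hst
    exact tsum_nonneg (hgnnterm j s hs hst)
  have hglle : ∀ (j : ℕ) (s : ℝ), 0 ≤ s → s ≤ t₂ → gl j s ≤ K * B * B := by
    intro j s hs hst
    have h1 : gl j s ≤ ∑' k : ℕ, K * B * (((k:ℝ)+1) * c s (k+1)) :=
      Summable.tsum_le_tsum (hgterm j s hs hst) (hgsummable j s hs hst)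
        ((hsum1 s hs hst).mul_left (K * B))
    rw [tsum_mul_left] at h1
    refine h1.trans ?_
    exact mul_le_mul_of_nonneg_left (hB s hs hst) (by positivity)
  -- the domain set contains [0, t₂]
  have hIccS : Set.Icc (0:ℝ) t₂ ⊆ {t : ℝ | 0 ≤ t ∧ ENNReal.ofReal t < T} := fun s hs =>
    ⟨hs.1, hdomT s hs.2⟩
  have hIocsub : Set.Ioc (0:ℝ) t₂ ⊆ Set.Icc (0:ℝ) t₂ := Set.Ioc_subset_Icc_self
  -- interval integrability of the loss term on [0, t₂]
  have hllint : ∀ j : ℕ, IntervalIntegrable (ll j) volume 0 t₂ := by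
    intro j
    have h1 : IntervalIntegrable (L j) volume 0 t₂ := hc.loss_integrable j t₂ h20 h₂
    have h2 : ContinuousOn (fun s => c s (j+1)) (Set.uIcc 0 t₂) := by
      refine (hc.cont j).mono ?_
      rw [Set.uIcc_of_le h20]; exact hIccS
    have h3 := h1.continuousOn_mul h2
    have heq : ll j = fun s => c s (j+1) * L j s := funext (hlleq j)
    rw [heq]; exact h3
  -- a.e. strong measurability of the gain term
  have hglmeas : ∀ j : ℕ, AEStronglyMeasurable (gl j)
      (volume.restrict (Set.Ioc (0:ℝ) t₂)) := by
    intro j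
    have hpart : ∀ N : ℕ, AEStronglyMeasurable
        (fun s => ∑ k ∈ Finset.range N,
          a (j + 1 + (k + 1)) (k + 1) * c s (j + 1 + (k + 1)) * c s (k + 1))
        (volume.restrict (Set.Ioc (0:ℝ) t₂)) := by
      intro N
      refine Finset.aestronglyMeasurable_fun_sum _ fun k _ => ?_
      have hcont1 : ContinuousOn (fun s => c s (j + 1 + (k + 1)))
          {t : ℝ | 0 ≤ t ∧ ENNReal.ofReal t < T} := by
        have hidx : j + 1 + (k + 1) = (j + k + 1) + 1 := by omega
        rw [hidx]; exact hc.cont (j + k + 1)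
      have hcont : ContinuousOn
          (fun s => a (j + 1 + (k + 1)) (k + 1) * c s (j + 1 + (k + 1)) * c s (k + 1))
          (Set.Ioc (0:ℝ) t₂) :=
        (((continuousOn_const.mul hcont1).mul (hc.cont k)).mono (hIocsub.trans hIccS))
      exact hcont.aestronglyMeasurable measurableSet_Ioc
    apply aestronglyMeasurable_of_tendsto_ae atTop hpart
    refine (ae_restrict_iff' measurableSet_Ioc).2 (ae_of_all _ fun s hs => ?_)
    simpa only [hgldef] using ((hgsummable j s hs.1.le hs.2).hasSum).tendsto_sum_nat
  -- interval integrability of the gain term on [0, t₂]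
  have hglint : ∀ j : ℕ, IntervalIntegrable (gl j) volume 0 t₂ := by
    intro j
    rw [intervalIntegrable_iff_integrableOn_Ioc_of_le h20]
    refine Integrable.mono' (g := fun _ => K * B * B)
      (integrableOn_const measure_Ioc_lt_top.ne) (hglmeas j) ?_
    refine (ae_restrict_iff' measurableSet_Ioc).2 (ae_of_all _ fun s hs => ?_)
    rw [Real.norm_eq_abs, abs_of_nonneg (hglnn j s hs.1.le hs.2)]
    exact hglle j s hs.1.le hs.2
  -- the fundamental identity on [t₁, t₂]
  have hdelta : ∀ j : ℕ,
      c t₂ (j+1) - c t₁ (j+1) = ∫ s in Set.Ioc t₁ t₂, (gl j s - ll j s) := by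
    intro j
    have hFint2 : IntervalIntegrable (fun s => gl j s - ll j s) volume 0 t₂ :=
      (hglint j).sub (hllint j)
    have hF01 : IntervalIntegrable (fun s => gl j s - ll j s) volume 0 t₁ := by
      refine hFint2.mono_set ?_
      rw [Set.uIcc_of_le h₁, Set.uIcc_of_le h20]
      exact Set.Icc_subset_Icc le_rfl h₁₂
    have hF12 : IntervalIntegrable (fun s => gl j s - ll j s) volume t₁ t₂ := by
      refine hFint2.mono_set ?_
      rw [Set.uIcc_of_le h₁₂, Set.uIcc_of_le h20]
      exact Set.Icc_subset_Icc h₁ le_rfl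
    have hbody : ∀ t : ℝ, 0 ≤ t → ENNReal.ofReal t < T →
        c t (j+1) = c 0 (j+1) + ∫ s in (0:ℝ)..t, (gl j s - ll j s) := by
      intro t ht hT'
      simpa only [hgldef, hlldef] using hc.eqn j t ht hT'
    have he2 := hbody t₂ h20 h₂
    have he1 := hbody t₁ h₁ (hdomT t₁ h₁₂)
    have hadd := intervalIntegral.integral_add_adjacent_intervals hF01 hF12
    have h5 : c t₂ (j+1) - c t₁ (j+1) = ∫ s in t₁..t₂, (gl j s - ll j s) := by
      rw [he2, he1]; linarith
    rw [h5, intervalIntegral.integral_of_le h₁₂]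
  -- main estimate for each truncation level n
  have main : ∀ n : ℕ,
      ∑ j ∈ Finset.range n, (((j:ℝ)+1) * c t₂ (j+1)) ≤ norm1 (c t₁) := by
    intro n
    set w : ℕ → ℝ := fun j => min ((j:ℝ)+1) (n:ℝ) with hwdef
    have hwnn : ∀ j, 0 ≤ w j := fun j => le_min (by positivity) (Nat.cast_nonneg n)
    have hwle1 : ∀ j : ℕ, w j ≤ (j:ℝ)+1 := fun j => min_le_left _ _
    have hwlen : ∀ j : ℕ, w j ≤ (n:ℝ) := fun j => min_le_right _ _
    have hwmono : ∀ j k : ℕ, w j ≤ w (j+k+1) := by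
      intro j k
      refine min_le_min ?_ le_rfl
      push_cast
      linarith
    have hsubIoc : Set.Ioc t₁ t₂ ⊆ Set.Ioc 0 t₂ := Set.Ioc_subset_Ioc_left h₁
    have hsforIoc : ∀ s ∈ Set.Ioc t₁ t₂, 0 ≤ s ∧ s ≤ t₂ := fun s hs =>
      ⟨h₁.trans hs.1.le, hs.2⟩
    have hllint' : ∀ j, IntegrableOn (fun s => w j * ll j s) (Set.Ioc t₁ t₂) volume := by
      intro j
      exact ((((intervalIntegrable_iff_integrableOn_Ioc_of_le h20).1 (hllint j)).mono_set
        hsubIoc).const_mul _)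
    have hglint' : ∀ j, IntegrableOn (fun s => w j * gl j s) (Set.Ioc t₁ t₂) volume := by
      intro j
      exact ((((intervalIntegrable_iff_integrableOn_Ioc_of_le h20).1 (hglint j)).mono_set
        hsubIoc).const_mul _)
    set Il : ℕ → ℝ := fun j => ∫ s in Set.Ioc t₁ t₂, w j * ll j s with hIldef
    set Ig : ℕ → ℝ := fun j => ∫ s in Set.Ioc t₁ t₂, w j * gl j s with hIgdef
    have hident : ∀ j : ℕ, w j * c t₂ (j+1) - w j * c t₁ (j+1) = Ig j - Il j := by
      intro j
      have h0 := hdelta j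
      have h1 : w j * c t₂ (j+1) - w j * c t₁ (j+1)
          = ∫ s in Set.Ioc t₁ t₂, w j * (gl j s - ll j s) := by
        rw [integral_const_mul, ← h0]
        ring
      rw [h1]
      have h2 : (fun s => w j * (gl j s - ll j s))
          = fun s => w j * gl j s - w j * ll j s := by
        funext s
        ring
      rw [h2]
      simp only [hIgdef, hIldef]
      exact integral_sub (hglint' j) (hllint' j)
    have hIlnn : ∀ j, 0 ≤ Il j := by
      intro j
      simp only [hIldef]
      refine setIntegral_nonneg measurableSet_Ioc fun s hs => ?_
      exact mul_nonneg (hwnn j) (hllnn j s (hsforIoc s hs).1 (hsforIoc s hs).2)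
    have hIgnn : ∀ j, 0 ≤ Ig j := by
      intro j
      simp only [hIgdef]
      refine setIntegral_nonneg measurableSet_Ioc fun s hs => ?_
      exact mul_nonneg (hwnn j) (hglnn j s (hsforIoc s hs).1 (hsforIoc s hs).2)
    set LT : ℝ → ℝ := fun s => ∑' j, w j * ll j s with hLTdef
    have hLTsummand_nn : ∀ s, 0 ≤ s → s ≤ t₂ → ∀ j, 0 ≤ w j * ll j s :=
      fun s hs hst j => mul_nonneg (hwnn j) (hllnn j s hs hst)
    have hLTsummand_le : ∀ s, 0 ≤ s → s ≤ t₂ → ∀ j,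
        w j * ll j s ≤ ((n:ℝ)*(K*B)) * (((j:ℝ)+1) * c s (j+1)) := by
      intro s hs hst j
      have h1 : w j * ll j s ≤ (n:ℝ) * ll j s :=
        mul_le_mul_of_nonneg_right (hwlen j) (hllnn j s hs hst)
      refine h1.trans ?_
      have h2 := mul_le_mul_of_nonneg_left (hllle j s hs hst)
        (Nat.cast_nonneg n : (0:ℝ) ≤ (n:ℝ))
      calc (n:ℝ) * ll j s ≤ (n:ℝ) * (K*B*(((j:ℝ)+1) * c s (j+1))) := h2
        _ = ((n:ℝ)*(K*B)) * (((j:ℝ)+1) * c s (j+1)) := by ring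
    have hLTsummable : ∀ s, 0 ≤ s → s ≤ t₂ → Summable (fun j => w j * ll j s) :=
      fun s hs hst => Summable.of_nonneg_of_le (hLTsummand_nn s hs hst)
        (hLTsummand_le s hs hst) ((hsum1 s hs hst).mul_left _)
    have hLTnn : ∀ s, 0 ≤ s → s ≤ t₂ → 0 ≤ LT s :=
      fun s hs hst => tsum_nonneg (hLTsummand_nn s hs hst)
    have hLTle : ∀ s, 0 ≤ s → s ≤ t₂ → LT s ≤ (n:ℝ)*(K*B)*B := by
      intro s hs hst
      have h1 : LT s ≤ ∑' j : ℕ, ((n:ℝ)*(K*B)) * (((j:ℝ)+1) * c s (j+1)) :=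
        Summable.tsum_le_tsum (hLTsummand_le s hs hst) (hLTsummable s hs hst)
          ((hsum1 s hs hst).mul_left _)
      rw [tsum_mul_left] at h1
      refine h1.trans ?_
      exact mul_le_mul_of_nonneg_left (hB s hs hst) (by positivity)
    -- key pointwise inequality via the ENNReal rearrangement
    have hkey : ∀ s, 0 ≤ s → s ≤ t₂ → ∀ N : ℕ,
        ∑ j ∈ Finset.range N, w j * gl j s ≤ LT s := by
      intro s hs hst N
      have hgl_ofReal : ∀ j : ℕ, ENNReal.ofReal (w j * gl j s)
          = ∑' k : ℕ, ENNReal.ofReal (w j) *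
              ENNReal.ofReal (a ((j+k+1)+1) (k+1) * c s ((j+k+1)+1) * c s (k+1)) := by
        intro j
        rw [ENNReal.ofReal_mul (hwnn j)]
        simp only [hgldef]
        rw [ENNReal.ofReal_tsum_of_nonneg (hgnnterm j s hs hst) (hgsummable j s hs hst),
          ← ENNReal.tsum_mul_left]
        refine tsum_congr fun k => ?_
        have hidx : j + 1 + (k+1) = (j+k+1)+1 := by omega
        rw [hidx]
      have hll_ofReal : ∀ j : ℕ, ENNReal.ofReal (w j * ll j s)
          = ∑' k : ℕ, ENNReal.ofReal (w j) *
              ENNReal.ofReal (a (j+1) (k+1) * c s (j+1) * c s (k+1)) := by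
        intro j
        rw [ENNReal.ofReal_mul (hwnn j)]
        simp only [hlldef]
        rw [ENNReal.ofReal_tsum_of_nonneg
          (fun k => mul_nonneg (mul_nonneg (hpos j k) (hnn s hs hst j)) (hnn s hs hst k))
          (hllsummable j s hs hst), ← ENNReal.tsum_mul_left]
      have hLT_ofReal : ENNReal.ofReal (LT s)
          = ∑' (j : ℕ) (k : ℕ), ENNReal.ofReal (w j) *
              ENNReal.ofReal (a (j+1) (k+1) * c s (j+1) * c s (k+1)) := by
        simp only [hLTdef]
        rw [ENNReal.ofReal_tsum_of_nonneg (hLTsummand_nn s hs hst) (hLTsummable s hs hst)]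
        exact tsum_congr hll_ofReal
      have hrearr := rbk_rearrange (fun j => ENNReal.ofReal (w j))
        (fun m k => ENNReal.ofReal (a (m+1) (k+1) * c s (m+1) * c s (k+1)))
        (fun j k => ENNReal.ofReal_le_ofReal (hwmono j k))
      have hchain : ENNReal.ofReal (∑ j ∈ Finset.range N, w j * gl j s)
          ≤ ENNReal.ofReal (LT s) := by
        rw [ENNReal.ofReal_sum_of_nonneg
          (fun j _ => mul_nonneg (hwnn j) (hglnn j s hs hst)), hLT_ofReal]
        calc ∑ j ∈ Finset.range N, ENNReal.ofReal (w j * gl j s)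
            = ∑ j ∈ Finset.range N, ∑' k : ℕ, ENNReal.ofReal (w j) *
                ENNReal.ofReal (a ((j+k+1)+1) (k+1) * c s ((j+k+1)+1) * c s (k+1)) :=
              Finset.sum_congr rfl fun j _ => hgl_ofReal j
          _ ≤ ∑' (j : ℕ) (k : ℕ), ENNReal.ofReal (w j) *
                ENNReal.ofReal (a ((j+k+1)+1) (k+1) * c s ((j+k+1)+1) * c s (k+1)) :=
              ENNReal.sum_le_tsum _
          _ ≤ ∑' (j : ℕ) (k : ℕ), ENNReal.ofReal (w j) *
                ENNReal.ofReal (a (j+1) (k+1) * c s (j+1) * c s (k+1)) := hrearr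
      exact (ENNReal.ofReal_le_ofReal_iff (hLTnn s hs hst)).1 hchain
    -- integrability of LT
    have hLTmeas : AEStronglyMeasurable LT (volume.restrict (Set.Ioc t₁ t₂)) := by
      have hpartmeas : ∀ N : ℕ, AEStronglyMeasurable
          (fun s => ∑ j ∈ Finset.range N, w j * ll j s)
          (volume.restrict (Set.Ioc t₁ t₂)) := by
        intro N
        exact Finset.aestronglyMeasurable_fun_sum _ fun j _ => (hllint' j).aestronglyMeasurable
      apply aestronglyMeasurable_of_tendsto_ae atTop hpartmeas
      refine (ae_restrict_iff' measurableSet_Ioc).2 (ae_of_all _ fun s hs => ?_)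
      exact ((hLTsummable s (hsforIoc s hs).1 (hsforIoc s hs).2).hasSum).tendsto_sum_nat
    have hLTint : IntegrableOn LT (Set.Ioc t₁ t₂) volume := by
      refine Integrable.mono' (g := fun _ => (n:ℝ)*(K*B)*B)
        (integrableOn_const measure_Ioc_lt_top.ne) hLTmeas ?_
      refine (ae_restrict_iff' measurableSet_Ioc).2 (ae_of_all _ fun s hs => ?_)
      rw [Real.norm_eq_abs, abs_of_nonneg (hLTnn s (hsforIoc s hs).1 (hsforIoc s hs).2)]
      exact hLTle s (hsforIoc s hs).1 (hsforIoc s hs).2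
    -- monotone convergence for the loss side
    have heqN : ∀ N : ℕ, ∑ j ∈ Finset.range N, Il j
        = ∫ s in Set.Ioc t₁ t₂, (∑ j ∈ Finset.range N, w j * ll j s) := by
      intro N
      simp only [hIldef]
      exact (integral_finset_sum _ fun j _ => hllint' j).symm
    have hMCT : Tendsto (fun N => ∑ j ∈ Finset.range N, Il j) atTop
        (𝓝 (∫ s in Set.Ioc t₁ t₂, LT s)) := by
      have h := integral_tendsto_of_tendsto_of_monotone
        (f := fun N s => ∑ j ∈ Finset.range N, w j * ll j s) (F := LT)
        (fun N => integrable_finset_sum _ fun j _ => hllint' j) hLTint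
        ((ae_restrict_iff' measurableSet_Ioc).2 (ae_of_all _ fun s hs => by
          intro N M hNM
          exact Finset.sum_le_sum_of_subset_of_nonneg (Finset.range_subset_range.2 hNM)
            (fun j _ _ => hLTsummand_nn s (hsforIoc s hs).1 (hsforIoc s hs).2 j)))
        ((ae_restrict_iff' measurableSet_Ioc).2 (ae_of_all _ fun s hs =>
          ((hLTsummable s (hsforIoc s hs).1 (hsforIoc s hs).2).hasSum).tendsto_sum_nat))
      exact h.congr fun N => (heqN N).symm
    have hIlmono : Monotone (fun N => ∑ j ∈ Finset.range N, Il j) := by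
      intro N M hNM
      exact Finset.sum_le_sum_of_subset_of_nonneg (Finset.range_subset_range.2 hNM)
        (fun j _ _ => hIlnn j)
    have hIlsummable : Summable Il :=
      summable_of_sum_range_le hIlnn (fun N => hIlmono.ge_of_tendsto hMCT N)
    have hIltsum : ∑' j, Il j = ∫ s in Set.Ioc t₁ t₂, LT s :=
      tendsto_nhds_unique hIlsummable.hasSum.tendsto_sum_nat hMCT
    -- gain side
    have hIgbound : ∀ N : ℕ, ∑ j ∈ Finset.range N, Ig j ≤ ∫ s in Set.Ioc t₁ t₂, LT s := by
      intro N
      have h1 : ∑ j ∈ Finset.range N, Ig j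
          = ∫ s in Set.Ioc t₁ t₂, (∑ j ∈ Finset.range N, w j * gl j s) := by
        simp only [hIgdef]
        exact (integral_finset_sum _ fun j _ => hglint' j).symm
      rw [h1]
      exact setIntegral_mono_on (integrable_finset_sum _ fun j _ => hglint' j) hLTint
        measurableSet_Ioc (fun s hs => hkey s (hsforIoc s hs).1 (hsforIoc s hs).2 N)
    have hIgsummable : Summable Ig := summable_of_sum_range_le hIgnn hIgbound
    have hIgtsum : ∑' j, Ig j ≤ ∫ s in Set.Ioc t₁ t₂, LT s :=
      Real.tsum_le_of_sum_range_le hIgnn hIgbound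
    -- combine
    have hsw2 : Summable (fun j => w j * c t₂ (j+1)) :=
      Summable.of_nonneg_of_le (fun j => mul_nonneg (hwnn j) (hnn t₂ h20 le_rfl j))
        (fun j => mul_le_mul_of_nonneg_right (hwle1 j) (hnn t₂ h20 le_rfl j))
        (hsum1 t₂ h20 le_rfl)
    have hsw1 : Summable (fun j => w j * c t₁ (j+1)) :=
      Summable.of_nonneg_of_le (fun j => mul_nonneg (hwnn j) (hnn t₁ h₁ h₁₂ j))
        (fun j => mul_le_mul_of_nonneg_right (hwle1 j) (hnn t₁ h₁ h₁₂ j))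
        (hsum1 t₁ h₁ h₁₂)
    have hdiff : (∑' j, w j * c t₂ (j+1)) - (∑' j, w j * c t₁ (j+1))
        = (∑' j, Ig j) - (∑' j, Il j) := by
      rw [← Summable.tsum_sub hsw2 hsw1, ← Summable.tsum_sub hIgsummable hIlsummable]
      exact tsum_congr hident
    have hfinal1 : (∑' j, w j * c t₂ (j+1)) ≤ ∑' j, w j * c t₁ (j+1) := by
      have h1 : (∑' j, Ig j) - (∑' j, Il j) ≤ 0 := by
        rw [hIltsum]
        linarith [hIgtsum]
      linarith [hdiff]
    have hfinal2 : (∑' j, w j * c t₁ (j+1)) ≤ norm1 (c t₁) :=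
      Summable.tsum_le_tsum (fun j => mul_le_mul_of_nonneg_right (hwle1 j) (hnn t₁ h₁ h₁₂ j))
        hsw1 (hsum1 t₁ h₁ h₁₂)
    have hps : ∑ j ∈ Finset.range n, (((j:ℝ)+1) * c t₂ (j+1))
        = ∑ j ∈ Finset.range n, w j * c t₂ (j+1) := by
      refine Finset.sum_congr rfl fun j hj => ?_
      have hj' : (j:ℝ)+1 ≤ (n:ℝ) := by
        have h := Finset.mem_range.1 hj
        exact_mod_cast Nat.succ_le_of_lt h
      rw [show w j = (j:ℝ)+1 from min_eq_left hj']
    rw [hps]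
    calc ∑ j ∈ Finset.range n, w j * c t₂ (j+1)
        ≤ ∑' j, w j * c t₂ (j+1) :=
          Summable.sum_le_tsum _ (fun j _ => mul_nonneg (hwnn j) (hnn t₂ h20 le_rfl j)) hsw2
      _ ≤ ∑' j, w j * c t₁ (j+1) := hfinal1
      _ ≤ norm1 (c t₁) := hfinal2
  -- conclude
  exact Real.tsum_le_of_sum_range_le
    (fun j => mul_nonneg (by positivity) (hnn t₂ h20 le_rfl j)) main
end

section
/- Assume a_{j,k} ≤ K·(j·k)^β for some constant K > 0, some 0 ≤ β ≤ 1/2 and all j,k ∈ ℕ, and let c be a mild solution of the RBK system on [0,T). Then for all 0 ≤ τ ≤ t < T: Σ_{j=1}^∞ c_j(t) − Σ_{j=1}^∞ c_j(τ) = − (1/2) ∫_τ^t Σ_{j=1}^∞ Σ_{k=1}^∞ a_{j,k} c_j(s) c_k(s) ds − (1/2) ∫_τ^t Σ_{j=1}^∞ a_{j,j} c_j(s)² ds. -/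
open MeasureTheory Filter Topology
open scoped ENNReal

set_option maxHeartbeats 1000000

private lemma aesm_tsum_of_contOn {I : Set ℝ} (hI : MeasurableSet I) {g : ℝ → ℕ → ℝ}
    (hcont : ∀ n : ℕ, ContinuousOn (fun s => g s n) I)
    (hsum : ∀ s ∈ I, Summable fun n => g s n) :
    AEStronglyMeasurable (fun s => ∑' n, g s n) (volume.restrict I) := by
  refine aestronglyMeasurable_of_tendsto_ae atTop
    (f := fun (N : ℕ) (s : ℝ) => ∑ n ∈ Finset.range N, g s n) (fun N => ?_) ?_
  · exact (continuousOn_finset_sum _ fun n _ => hcont n).aestronglyMeasurable hI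
  · filter_upwards [ae_restrict_mem hI] with s hs
    exact (hsum s hs).hasSum.tendsto_sum_nat

/-- evolution of the total number of clusters, for
`a_{j,k} ≤ K (jk)^β`, `0 ≤ β ≤ 1/2`:
`Σ_j c_j(t) − Σ_j c_j(τ) = −½ ∫_τ^t Σ_j Σ_k a_{j,k} c_j c_k − ½ ∫_τ^t Σ_j a_{j,j} c_j²`. -/
theorem rbk_number_equation
    (a : ℕ → ℕ → ℝ) (K : ℝ) (hK : 0 < K) (β : ℝ) (hβ0 : 0 ≤ β) (hβ : β ≤ 1 / 2)
    (hsym : ∀ j k : ℕ, a (j + 1) (k + 1) = a (k + 1) (j + 1))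
    (hpos : ∀ j k : ℕ, 0 ≤ a (j + 1) (k + 1))
    (hbound : ∀ j k : ℕ, a (j + 1) (k + 1) ≤ K * ((((j : ℝ) + 1) * ((k : ℝ) + 1)) ^ β))
    (T : ℝ≥0∞) (c : ℝ → ℕ → ℝ) (hc : IsMildSolution a T c)
    (τ t : ℝ) (hτ : 0 ≤ τ) (hτt : τ ≤ t) (ht : ENNReal.ofReal t < T) :
    (∑' j : ℕ, c t (j + 1)) - (∑' j : ℕ, c τ (j + 1)) =
      -(1 / 2) * (∫ s in τ..t, ∑' p : ℕ × ℕ,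
          a (p.1 + 1) (p.2 + 1) * c s (p.1 + 1) * c s (p.2 + 1))
      - (1 / 2) * ∫ s in τ..t, ∑' j : ℕ, a (j + 1) (j + 1) * c s (j + 1) ^ 2 := by
  classical
  have ht0 : (0:ℝ) ≤ t := le_trans hτ hτt
  have hτT : ENNReal.ofReal τ < T := lt_of_le_of_lt (ENNReal.ofReal_le_ofReal hτt) ht
  obtain ⟨B, hB⟩ := hc.bdd
  set S : Set ℝ := {s : ℝ | 0 ≤ s ∧ ENNReal.ofReal s < T} with hSdef
  have hmemS : ∀ s : ℝ, 0 ≤ s → s ≤ t → s ∈ S := fun s h1 h2 =>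
    ⟨h1, lt_of_le_of_lt (ENNReal.ofReal_le_ofReal h2) ht⟩
  -- pointwise facts about `c s`
  have hcnn : ∀ s ∈ S, ∀ j : ℕ, 0 ≤ c s (j + 1) := fun s hs => (hc.mem s hs.1 hs.2).1
  have hmom : ∀ s ∈ S, Summable (fun j : ℕ => ((j : ℝ) + 1) * c s (j + 1)) :=
    fun s hs => (hc.mem s hs.1 hs.2).2
  have hmomnn : ∀ s ∈ S, ∀ j : ℕ, 0 ≤ ((j : ℝ) + 1) * c s (j + 1) := fun s hs j =>
    mul_nonneg (by positivity) (hcnn s hs j)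
  have hnorm1nn : ∀ s ∈ S, 0 ≤ norm1 (c s) := fun s hs => tsum_nonneg (hmomnn s hs)
  have h0S : (0:ℝ) ∈ S := hmemS 0 le_rfl ht0
  have hBnn : 0 ≤ B := le_trans (hnorm1nn 0 h0S) (hB 0 le_rfl h0S.2)
  -- the pair function
  set F : ℝ → ℕ × ℕ → ℝ :=
    fun s p => a (p.1 + 1) (p.2 + 1) * c s (p.1 + 1) * c s (p.2 + 1) with hFdef
  have hFnn : ∀ s ∈ S, ∀ p : ℕ × ℕ, 0 ≤ F s p := fun s hs p =>
    mul_nonneg (mul_nonneg (hpos _ _) (hcnn s hs _)) (hcnn s hs _)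
  have hFsymm : ∀ s : ℝ, ∀ x y : ℕ, F s (x, y) = F s (y, x) := by
    intro s x y
    simp only [hFdef]
    rw [hsym]
    ring
  -- domination of F
  have hFle : ∀ s ∈ S, ∀ p : ℕ × ℕ,
      F s p ≤ (K * (((p.1 : ℝ) + 1) * c s (p.1 + 1))) * (((p.2 : ℝ) + 1) * c s (p.2 + 1)) := by
    intro s hs p
    have h1 : (1:ℝ) ≤ ((p.1 : ℝ) + 1) * ((p.2 : ℝ) + 1) := by
      nlinarith [Nat.cast_nonneg (α := ℝ) p.1, Nat.cast_nonneg (α := ℝ) p.2]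
    have h2 : a (p.1 + 1) (p.2 + 1) ≤ K * (((p.1 : ℝ) + 1) * ((p.2 : ℝ) + 1)) := by
      refine le_trans (hbound p.1 p.2) ?_
      have : (((p.1 : ℝ) + 1) * ((p.2 : ℝ) + 1)) ^ β ≤ ((p.1 : ℝ) + 1) * ((p.2 : ℝ) + 1) := by
        calc (((p.1 : ℝ) + 1) * ((p.2 : ℝ) + 1)) ^ β
            ≤ (((p.1 : ℝ) + 1) * ((p.2 : ℝ) + 1)) ^ (1:ℝ) :=
              Real.rpow_le_rpow_of_exponent_le h1 (by linarith)
          _ = ((p.1 : ℝ) + 1) * ((p.2 : ℝ) + 1) := Real.rpow_one _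
      exact mul_le_mul_of_nonneg_left this hK.le
    have := mul_le_mul_of_nonneg_right
      (mul_le_mul_of_nonneg_right h2 (hcnn s hs p.1)) (hcnn s hs p.2)
    calc F s p ≤ K * (((p.1 : ℝ) + 1) * ((p.2 : ℝ) + 1)) * c s (p.1 + 1) * c s (p.2 + 1) := this
      _ = (K * (((p.1 : ℝ) + 1) * c s (p.1 + 1))) * (((p.2 : ℝ) + 1) * c s (p.2 + 1)) := by ring
  -- summability of the dominating product and of F
  have hdomS : ∀ s ∈ S, Summable (fun p : ℕ × ℕ =>
      (K * (((p.1 : ℝ) + 1) * c s (p.1 + 1))) * (((p.2 : ℝ) + 1) * c s (p.2 + 1))) := by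
    intro s hs
    exact Summable.mul_of_nonneg (f := fun j : ℕ => K * (((j : ℝ) + 1) * c s (j + 1)))
      (g := fun k : ℕ => ((k : ℝ) + 1) * c s (k + 1))
      ((hmom s hs).mul_left K) (hmom s hs)
      (fun j => mul_nonneg hK.le (hmomnn s hs j)) (fun j => hmomnn s hs j)
  have hFsum : ∀ s ∈ S, Summable (F s) := fun s hs =>
    Summable.of_nonneg_of_le (hFnn s hs) (hFle s hs) (hdomS s hs)
  -- the full sum is bounded by K * B ^ 2
  have hWle : ∀ s ∈ S, (∑' p : ℕ × ℕ, F s p) ≤ K * B ^ 2 := by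
    intro s hs
    have h1 : (∑' p : ℕ × ℕ, F s p) ≤ ∑' p : ℕ × ℕ,
        (K * (((p.1 : ℝ) + 1) * c s (p.1 + 1))) * (((p.2 : ℝ) + 1) * c s (p.2 + 1)) :=
      Summable.tsum_le_tsum (hFle s hs) (hFsum s hs) (hdomS s hs)
    have hfn : Summable (fun j : ℕ => ‖K * (((j : ℝ) + 1) * c s (j + 1))‖) := by
      refine ((hmom s hs).mul_left K).congr (fun j => ?_)
      exact (Real.norm_of_nonneg (mul_nonneg hK.le (hmomnn s hs j))).symm
    have hgn : Summable (fun k : ℕ => ‖((k : ℝ) + 1) * c s (k + 1)‖) := by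
      refine (hmom s hs).congr (fun j => ?_)
      exact (Real.norm_of_nonneg (hmomnn s hs j)).symm
    have h2 : (∑' p : ℕ × ℕ,
        (K * (((p.1 : ℝ) + 1) * c s (p.1 + 1))) * (((p.2 : ℝ) + 1) * c s (p.2 + 1)))
        = (K * norm1 (c s)) * norm1 (c s) := by
      rw [← tsum_mul_tsum_of_summable_norm
        (f := fun j : ℕ => K * (((j : ℝ) + 1) * c s (j + 1)))
        (g := fun k : ℕ => ((k : ℝ) + 1) * c s (k + 1)) hfn hgn]
      rw [tsum_mul_left]
      rfl
    have h3 : (K * norm1 (c s)) * norm1 (c s) ≤ K * B ^ 2 := by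
      have hb := hB s hs.1 hs.2
      have hn := hnorm1nn s hs
      have hsq : norm1 (c s) * norm1 (c s) ≤ B * B := mul_le_mul hb hb hn hBnn
      nlinarith
    linarith
  have hWnn : ∀ s ∈ S, 0 ≤ ∑' p : ℕ × ℕ, F s p := fun s hs => tsum_nonneg (hFnn s hs)
  -- injections
  have hiG : Function.Injective (fun q : ℕ × ℕ => ((q.1 + q.2 + 1, q.2) : ℕ × ℕ)) := by
    intro q q' h
    simp only [Prod.mk.injEq] at h
    obtain ⟨h1, h2⟩ := h
    exact Prod.ext (by omega) h2
  have hiGj : ∀ j : ℕ, Function.Injective (fun k : ℕ => ((j + k + 1, k) : ℕ × ℕ)) := by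
    intro j k k' h
    simpa using (Prod.mk.injEq _ _ _ _ ▸ h).2
  have hiLj : ∀ j : ℕ, Function.Injective (fun k : ℕ => ((j, k) : ℕ × ℕ)) := by
    intro j k k' h
    simpa using h
  have hiD : Function.Injective (fun j : ℕ => ((j, j) : ℕ × ℕ)) := by
    intro j j' h
    simpa using (Prod.mk.injEq _ _ _ _ ▸ h).1
  -- names for the statement integrands
  set gainφ : ℕ → ℝ → ℝ := fun j s =>
    ∑' k : ℕ, a (j + 1 + (k + 1)) (k + 1) * c s (j + 1 + (k + 1)) * c s (k + 1) with hgainφ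
  set lossφ : ℕ → ℝ → ℝ := fun j s =>
    ∑' k : ℕ, a (j + 1) (k + 1) * c s (j + 1) * c s (k + 1) with hlossφ
  set φ : ℕ → ℝ → ℝ := fun j s => gainφ j s - lossφ j s with hφdef
  set W : ℝ → ℝ := fun s => ∑' p : ℕ × ℕ, F s p with hWdef
  set D : ℝ → ℝ := fun s => ∑' j : ℕ, a (j + 1) (j + 1) * c s (j + 1) ^ 2 with hDdef
  set G : ℝ → ℝ := fun s => ∑' q : ℕ × ℕ, F s (q.1 + q.2 + 1, q.2) with hGdef
  -- identification of gain terms with F terms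
  have hgain_term : ∀ s : ℝ, ∀ j k : ℕ,
      a (j + 1 + (k + 1)) (k + 1) * c s (j + 1 + (k + 1)) * c s (k + 1)
        = F s (j + k + 1, k) := by
    intro s j k
    have h : j + 1 + (k + 1) = j + k + 1 + 1 := by omega
    rw [h]
  -- per-s summability facts about fibers
  have hgain_summ : ∀ s ∈ S, ∀ j : ℕ,
      Summable (fun k : ℕ => a (j + 1 + (k + 1)) (k + 1) * c s (j + 1 + (k + 1)) * c s (k + 1)) := by
    intro s hs j
    exact (((hFsum s hs).comp_injective (hiGj j))).congr (fun k => (hgain_term s j k).symm)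
  have hloss_summ : ∀ s ∈ S, ∀ j : ℕ,
      Summable (fun k : ℕ => a (j + 1) (k + 1) * c s (j + 1) * c s (k + 1)) := by
    intro s hs j
    exact ((hFsum s hs).comp_injective (hiLj j))
  -- fiberwise HasSum for gain and loss
  have hgain_hasSum : ∀ s ∈ S, ∀ j : ℕ,
      HasSum (fun k : ℕ => F s (j + k + 1, k)) (gainφ j s) := by
    intro s hs j
    have hsum_jk : Summable (fun k : ℕ => F s (j + k + 1, k)) :=
      (hFsum s hs).comp_injective (hiGj j)
    have heq : gainφ j s = ∑' k : ℕ, F s (j + k + 1, k) :=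
      tsum_congr (fun k => hgain_term s j k)
    rw [heq]
    exact hsum_jk.hasSum
  have hloss_hasSum : ∀ s ∈ S, ∀ j : ℕ,
      HasSum (fun k : ℕ => F s (j, k)) (lossφ j s) := by
    intro s hs j
    exact ((hFsum s hs).comp_injective (hiLj j)).hasSum
  have hGfib : ∀ s ∈ S, HasSum (fun j : ℕ => gainφ j s) (G s) := by
    intro s hs
    have hG : HasSum (fun q : ℕ × ℕ => F s (q.1 + q.2 + 1, q.2)) (G s) :=
      ((hFsum s hs).comp_injective hiG).hasSum
    exact hG.prod_fiberwise (fun j => hgain_hasSum s hs j)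
  have hLfib : ∀ s ∈ S, HasSum (fun j : ℕ => lossφ j s) (W s) := by
    intro s hs
    exact (hFsum s hs).hasSum.prod_fiberwise (fun j => hloss_hasSum s hs j)
  -- nonnegativity and bounds of gain/loss fibers
  have hgain_nn : ∀ s ∈ S, ∀ j : ℕ, 0 ≤ gainφ j s := by
    intro s hs j
    exact (hgain_hasSum s hs j).nonneg (fun k => hFnn s hs _)
  have hloss_nn : ∀ s ∈ S, ∀ j : ℕ, 0 ≤ lossφ j s := by
    intro s hs j
    exact (hloss_hasSum s hs j).nonneg (fun k => hFnn s hs _)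
  have hGnn : ∀ s ∈ S, 0 ≤ G s := by
    intro s hs
    exact (hGfib s hs).nonneg (fun j => hgain_nn s hs j)
  have hgain_le : ∀ s ∈ S, ∀ j : ℕ, gainφ j s ≤ W s := by
    intro s hs j
    have := hgain_hasSum s hs j
    refine hasSum_le_inj (fun k : ℕ => ((j + k + 1, k) : ℕ × ℕ)) (hiGj j)
      (fun p _ => hFnn s hs p) (fun k => le_rfl) this (hFsum s hs).hasSum
  have hloss_le : ∀ s ∈ S, ∀ j : ℕ, lossφ j s ≤ W s := by
    intro s hs j
    refine hasSum_le_inj (fun k : ℕ => ((j, k) : ℕ × ℕ)) (hiLj j)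
      (fun p _ => hFnn s hs p) (fun k => le_rfl) (hloss_hasSum s hs j) (hFsum s hs).hasSum
  -- diagonal
  have hD_hasSum : ∀ s ∈ S, HasSum (fun j : ℕ => F s (j, j)) (D s) := by
    intro s hs
    have hsumD : Summable (fun j : ℕ => F s (j, j)) := (hFsum s hs).comp_injective hiD
    have heq : D s = ∑' j : ℕ, F s (j, j) := by
      refine tsum_congr (fun j => ?_)
      simp only [hFdef]
      ring
    rw [heq]
    exact hsumD.hasSum
  have hDnn : ∀ s ∈ S, 0 ≤ D s := by
    intro s hs
    exact (hD_hasSum s hs).nonneg (fun j => hFnn s hs _)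
  have hDle : ∀ s ∈ S, D s ≤ W s := by
    intro s hs
    refine hasSum_le_inj (fun j : ℕ => ((j, j) : ℕ × ℕ)) hiD
      (fun p _ => hFnn s hs p) (fun k => le_rfl) (hD_hasSum s hs) (hFsum s hs).hasSum
  have hpair : ∀ (x y : ℕ) (p : ℕ × ℕ), x = p.1 → y = p.2 → (x, y) = p := by
    intro x y p h1 h2
    cases p
    simp_all
  -- the splitting identity W = G + G + D
  have hsplit : ∀ s ∈ S, W s = G s + G s + D s := by
    intro s hs
    set FA : ℕ × ℕ → ℝ := fun p => if p.2 < p.1 then F s p else 0 with hFA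
    set FB : ℕ × ℕ → ℝ := fun p => if p.1 < p.2 then F s p else 0 with hFB
    set FD : ℕ × ℕ → ℝ := fun p => if p.1 = p.2 then F s p else 0 with hFD
    have hGhs : HasSum (fun q : ℕ × ℕ => F s (q.1 + q.2 + 1, q.2)) (G s) :=
      ((hFsum s hs).comp_injective hiG).hasSum
    have hA : HasSum FA (G s) := by
      have hrange : ∀ p : ℕ × ℕ,
          p ∉ Set.range (fun q : ℕ × ℕ => ((q.1 + q.2 + 1, q.2) : ℕ × ℕ)) → FA p = 0 := by
        intro p hp
        have : ¬ p.2 < p.1 := by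
          intro hlt
          exact hp ⟨(p.1 - p.2 - 1, p.2), hpair _ _ _ (by omega) rfl⟩
        simp [hFA, this]
      refine (Function.Injective.hasSum_iff hiG hrange).1 ?_
      have : (FA ∘ fun q : ℕ × ℕ => ((q.1 + q.2 + 1, q.2) : ℕ × ℕ))
          = fun q : ℕ × ℕ => F s (q.1 + q.2 + 1, q.2) := by
        funext q
        simp only [Function.comp_apply, hFA]
        rw [if_pos (by omega)]
      rw [this]
      exact hGhs
    have hBs : HasSum FB (G s) := by
      have hiL : Function.Injective (fun q : ℕ × ℕ => ((q.1, q.1 + q.2 + 1) : ℕ × ℕ)) := by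
        intro q q' h
        simp only [Prod.mk.injEq] at h
        exact Prod.ext h.1 (by omega)
      have hrange : ∀ p : ℕ × ℕ,
          p ∉ Set.range (fun q : ℕ × ℕ => ((q.1, q.1 + q.2 + 1) : ℕ × ℕ)) → FB p = 0 := by
        intro p hp
        have : ¬ p.1 < p.2 := by
          intro hlt
          exact hp ⟨(p.1, p.2 - p.1 - 1), hpair _ _ _ rfl (by omega)⟩
        simp [hFB, this]
      refine (Function.Injective.hasSum_iff hiL hrange).1 ?_
      have hcomp : (FB ∘ fun q : ℕ × ℕ => ((q.1, q.1 + q.2 + 1) : ℕ × ℕ))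
          = (fun q : ℕ × ℕ => F s (q.1 + q.2 + 1, q.2)) ∘ (Equiv.prodComm ℕ ℕ) := by
        funext q
        simp only [Function.comp_apply, hFB, Equiv.prodComm_apply, Prod.swap]
        rw [if_pos (by omega)]
        have : F s (q.1, q.1 + q.2 + 1) = F s (q.1 + q.2 + 1, q.1) := hFsymm s _ _
        rw [this]
        congr 2
        omega
      rw [hcomp]
      exact ((Equiv.prodComm ℕ ℕ).hasSum_iff).2 hGhs
    have hDs : HasSum FD (D s) := by
      have hrange : ∀ p : ℕ × ℕ,
          p ∉ Set.range (fun j : ℕ => ((j, j) : ℕ × ℕ)) → FD p = 0 := by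
        intro p hp
        have : ¬ p.1 = p.2 := by
          intro hlt
          exact hp ⟨p.1, hpair _ _ _ rfl (by omega)⟩
        simp [hFD, this]
      refine (Function.Injective.hasSum_iff hiD hrange).1 ?_
      have : (FD ∘ fun j : ℕ => ((j, j) : ℕ × ℕ)) = fun j : ℕ => F s (j, j) := by
        funext j
        simp [hFD]
      rw [this]
      exact hD_hasSum s hs
    have htot : HasSum (fun p : ℕ × ℕ => FA p + FB p + FD p) (G s + G s + D s) :=
      (hA.add hBs).add hDs
    have hptw : (fun p : ℕ × ℕ => FA p + FB p + FD p) = F s := by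
      funext p
      simp only [hFA, hFB, hFD]
      rcases lt_trichotomy p.2 p.1 with h | h | h
      · rw [if_pos h, if_neg (by omega), if_neg (by omega)]; ring
      · rw [if_neg (by omega), if_neg (by omega), if_pos (by omega)]; ring
      · rw [if_neg (by omega), if_pos h, if_neg (by omega)]; ring
    rw [hptw] at htot
    exact ((hFsum s hs).hasSum.unique htot)
  -- the pointwise identity for the summed equations
  have hkey : ∀ s ∈ S, HasSum (fun j : ℕ => φ j s) (-(1 / 2) * W s - (1 / 2) * D s) := by
    intro s hs
    have h1 : HasSum (fun j : ℕ => gainφ j s - lossφ j s) (G s - W s) :=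
      (hGfib s hs).sub (hLfib s hs)
    have h2 : G s - W s = -(1 / 2) * W s - (1 / 2) * D s := by
      have := hsplit s hs
      linarith
    rw [← h2]
    exact h1
  -- measurability on measurable subsets of S
  have hcontF : ∀ p : ℕ × ℕ, ContinuousOn (fun s => F s p) S := by
    intro p
    exact (continuousOn_const.mul (hc.cont p.1)).mul (hc.cont p.2)
  have hAESM_φ : ∀ (I : Set ℝ), MeasurableSet I → I ⊆ S → ∀ j : ℕ,
      AEStronglyMeasurable (φ j) (volume.restrict I) := by
    intro I hI hIS j
    have h1 : AEStronglyMeasurable (gainφ j) (volume.restrict I) := by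
      refine aesm_tsum_of_contOn hI (g := fun s k =>
        a (j + 1 + (k + 1)) (k + 1) * c s (j + 1 + (k + 1)) * c s (k + 1)) ?_ ?_
      · intro k
        show ContinuousOn
          (fun s => a (j + 1 + (k + 1)) (k + 1) * c s (j + 1 + (k + 1)) * c s (k + 1)) I
        have hidx : j + 1 + (k + 1) = (j + k + 1) + 1 := by omega
        rw [hidx]
        exact ((continuousOn_const.mul (hc.cont (j + k + 1))).mul (hc.cont k)).mono hIS
      · intro s hsI
        exact hgain_summ s (hIS hsI) j
    have h2 : AEStronglyMeasurable (lossφ j) (volume.restrict I) := by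
      refine aesm_tsum_of_contOn hI (g := fun s k =>
        a (j + 1) (k + 1) * c s (j + 1) * c s (k + 1)) ?_ ?_
      · intro k
        exact ((continuousOn_const.mul (hc.cont j)).mul (hc.cont k)).mono hIS
      · intro s hsI
        exact hloss_summ s (hIS hsI) j
    exact h1.sub h2
  have hAESM_W : ∀ (I : Set ℝ), MeasurableSet I → I ⊆ S →
      AEStronglyMeasurable W (volume.restrict I) := by
    intro I hI hIS
    set e : ℕ ≃ ℕ × ℕ := (Denumerable.eqv (ℕ × ℕ)).symm with he
    have hWeq : W = fun s => ∑' n : ℕ, F s (e n) := by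
      funext s
      exact (e.tsum_eq (F s)).symm
    rw [hWeq]
    refine aesm_tsum_of_contOn hI (g := fun s n => F s (e n)) ?_ ?_
    · intro n
      exact (hcontF (e n)).mono hIS
    · intro s hsI
      exact (hFsum s (hIS hsI)).comp_injective e.injective
  have hAESM_D : ∀ (I : Set ℝ), MeasurableSet I → I ⊆ S →
      AEStronglyMeasurable D (volume.restrict I) := by
    intro I hI hIS
    refine aesm_tsum_of_contOn hI (g := fun s j => a (j + 1) (j + 1) * c s (j + 1) ^ 2) ?_ ?_
    · intro j
      exact (continuousOn_const.mul ((hc.cont j).pow 2)).mono hIS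
    · intro s hsI
      have hsumD : Summable (fun j : ℕ => F s (j, j)) :=
        (hFsum s (hIS hsI)).comp_injective hiD
      refine hsumD.congr (fun j => ?_)
      simp only [hFdef]
      ring
  -- interval integrability of each φ j on [0, t]
  have hIoc0t : (Set.Ioc (0:ℝ) t) ⊆ S := fun s hs => hmemS s hs.1.le hs.2
  have hIocτt : (Set.Ioc τ t) ⊆ S := fun s hs => hmemS s (le_trans hτ hs.1.le) hs.2
  have hφbound : ∀ s ∈ S, ∀ j : ℕ, ‖φ j s‖ ≤ K * B ^ 2 := by
    intro s hs j
    have hg1 := hgain_nn s hs j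
    have hg2 := le_trans (hgain_le s hs j) (hWle s hs)
    have hl1 := hloss_nn s hs j
    have hl2 := le_trans (hloss_le s hs j) (hWle s hs)
    rw [Real.norm_eq_abs, abs_le]
    constructor <;> simp only [hφdef] <;> linarith
  have hφint : ∀ j : ℕ, IntervalIntegrable (φ j) volume 0 t := by
    intro j
    rw [intervalIntegrable_iff_integrableOn_Ioc_of_le ht0]
    refine Integrable.mono' (g := fun _ => K * B ^ 2)
      (integrableOn_const measure_Ioc_lt_top.ne)
      (hAESM_φ _ measurableSet_Ioc hIoc0t j) ?_
    filter_upwards [ae_restrict_mem measurableSet_Ioc] with s hsI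
    exact hφbound s (hIoc0t hsI) j
  -- the equation on [τ, t]
  have heqτt : ∀ j : ℕ, c t (j + 1) - c τ (j + 1) = ∫ s in τ..t, φ j s := by
    intro j
    have h1 := hc.eqn j t ht0 ht
    have h2 := hc.eqn j τ hτ hτT
    have hi1 : IntervalIntegrable (φ j) volume 0 τ := by
      refine (hφint j).mono_set ?_
      rw [Set.uIcc_of_le hτ, Set.uIcc_of_le ht0]
      exact Set.Icc_subset_Icc le_rfl hτt
    have hi2 : IntervalIntegrable (φ j) volume τ t := by
      refine (hφint j).mono_set ?_
      rw [Set.uIcc_of_le hτt, Set.uIcc_of_le ht0]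
      exact Set.Icc_subset_Icc hτ le_rfl
    have hadd := intervalIntegral.integral_add_adjacent_intervals hi1 hi2
    have h1' : c t (j + 1) = c 0 (j + 1) + ∫ s in (0:ℝ)..t, φ j s := h1
    have h2' : c τ (j + 1) = c 0 (j + 1) + ∫ s in (0:ℝ)..τ, φ j s := h2
    rw [h1', h2']
    have : (∫ s in (0:ℝ)..τ, φ j s) + ∫ s in τ..t, φ j s = ∫ s in (0:ℝ)..t, φ j s := hadd
    linarith
  -- summability of c at t and τ
  have hcsum : ∀ s ∈ S, Summable (fun j : ℕ => c s (j + 1)) := by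
    intro s hs
    refine Summable.of_nonneg_of_le (hcnn s hs) (fun j => ?_) (hmom s hs)
    exact le_mul_of_one_le_left (hcnn s hs j)
      (by have := Nat.cast_nonneg (α := ℝ) j; linarith)
  have htS : t ∈ S := hmemS t ht0 le_rfl
  have hτS : τ ∈ S := hmemS τ hτ hτt
  -- LHS as a sum of interval integrals
  have hLHS : (∑' j : ℕ, c t (j + 1)) - (∑' j : ℕ, c τ (j + 1))
      = ∑' j : ℕ, ∫ s in τ..t, φ j s := by
    rw [← Summable.tsum_sub (hcsum t htS) (hcsum τ hτS)]
    exact tsum_congr (fun j => heqτt j)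
  -- interchange of sum and integral over Ioc τ t
  have hmeasτt : ∀ j : ℕ, AEStronglyMeasurable (φ j) (volume.restrict (Set.Ioc τ t)) :=
    fun j => hAESM_φ _ measurableSet_Ioc hIocτt j
  have hlint : (∑' j : ℕ, ∫⁻ s in Set.Ioc τ t, ‖φ j s‖₊ ∂volume) ≠ ⊤ := by
    have hswap : (∑' j : ℕ, ∫⁻ s in Set.Ioc τ t, ‖φ j s‖₊ ∂volume)
        = ∫⁻ s in Set.Ioc τ t, ∑' j : ℕ, (‖φ j s‖₊ : ℝ≥0∞) ∂volume :=
      (lintegral_tsum (fun j => (hmeasτt j).enorm)).symm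
    rw [hswap]
    refine ne_of_lt ?_
    have hptw : ∀ s ∈ Set.Ioc τ t,
        (∑' j : ℕ, (‖φ j s‖₊ : ℝ≥0∞)) ≤ ENNReal.ofReal (2 * (K * B ^ 2)) := by
      intro s hsI
      have hs := hIocτt hsI
      have h1 : ∀ j : ℕ, (‖φ j s‖₊ : ℝ≥0∞) ≤ ENNReal.ofReal (gainφ j s + lossφ j s) := by
        intro j
        rw [← enorm_eq_nnnorm, ← ofReal_norm]
        refine ENNReal.ofReal_le_ofReal ?_
        have hg1 := hgain_nn s hs j
        have hl1 := hloss_nn s hs j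
        rw [Real.norm_eq_abs, abs_le]
        simp only [hφdef]
        constructor <;> linarith
      calc (∑' j : ℕ, (‖φ j s‖₊ : ℝ≥0∞))
          ≤ ∑' j : ℕ, ENNReal.ofReal (gainφ j s + lossφ j s) := ENNReal.tsum_le_tsum h1
        _ = ENNReal.ofReal (∑' j : ℕ, (gainφ j s + lossφ j s)) :=
            (ENNReal.ofReal_tsum_of_nonneg
              (fun j => add_nonneg (hgain_nn s hs j) (hloss_nn s hs j))
              (((hGfib s hs).add (hLfib s hs)).summable)).symm
        _ ≤ ENNReal.ofReal (2 * (K * B ^ 2)) := by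
            refine ENNReal.ofReal_le_ofReal ?_
            have hsumeq : (∑' j : ℕ, (gainφ j s + lossφ j s)) = G s + W s :=
              ((hGfib s hs).add (hLfib s hs)).tsum_eq
            rw [hsumeq]
            have hGleW : G s ≤ W s := by
              have := hsplit s hs
              have := hDnn s hs
              have := hGnn s hs
              linarith
            have := hWle s hs
            linarith
    calc ∫⁻ s in Set.Ioc τ t, ∑' j : ℕ, (‖φ j s‖₊ : ℝ≥0∞) ∂volume
        ≤ ∫⁻ _ in Set.Ioc τ t, ENNReal.ofReal (2 * (K * B ^ 2)) ∂volume := by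
          refine lintegral_mono_ae ?_
          filter_upwards [ae_restrict_mem measurableSet_Ioc] with s hsI
          exact hptw s hsI
      _ = ENNReal.ofReal (2 * (K * B ^ 2)) * volume (Set.Ioc τ t) := by
          rw [lintegral_const, Measure.restrict_apply_univ]
      _ < ⊤ := ENNReal.mul_lt_top ENNReal.ofReal_lt_top measure_Ioc_lt_top
  have hinterchange : (∑' j : ℕ, ∫ s in Set.Ioc τ t, φ j s ∂volume)
      = ∫ s in Set.Ioc τ t, (∑' j : ℕ, φ j s) ∂volume :=
    (integral_tsum hmeasτt hlint).symm
  -- integrability of W and D on Ioc τ t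
  have hWint : IntegrableOn W (Set.Ioc τ t) volume := by
    refine Integrable.mono' (g := fun _ => K * B ^ 2)
      (integrableOn_const measure_Ioc_lt_top.ne)
      (hAESM_W _ measurableSet_Ioc hIocτt) ?_
    filter_upwards [ae_restrict_mem measurableSet_Ioc] with s hsI
    have hs := hIocτt hsI
    rw [Real.norm_eq_abs, abs_le]
    have := hWnn s hs
    have := hWle s hs
    constructor <;> linarith
  have hDint : IntegrableOn D (Set.Ioc τ t) volume := by
    refine Integrable.mono' (g := fun _ => K * B ^ 2)
      (integrableOn_const measure_Ioc_lt_top.ne)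
      (hAESM_D _ measurableSet_Ioc hIocτt) ?_
    filter_upwards [ae_restrict_mem measurableSet_Ioc] with s hsI
    have hs := hIocτt hsI
    rw [Real.norm_eq_abs, abs_le]
    have h1 := hDnn s hs
    have h2 := le_trans (hDle s hs) (hWle s hs)
    constructor <;> linarith
  -- final computation
  rw [hLHS]
  have hstep1 : (∑' j : ℕ, ∫ s in τ..t, φ j s)
      = ∫ s in Set.Ioc τ t, (∑' j : ℕ, φ j s) ∂volume := by
    rw [← hinterchange]
    refine tsum_congr (fun j => ?_)
    rw [intervalIntegral.integral_of_le hτt]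
  rw [hstep1]
  have hstep2 : (∫ s in Set.Ioc τ t, (∑' j : ℕ, φ j s) ∂volume)
      = ∫ s in Set.Ioc τ t, (-(1 / 2) * W s - (1 / 2) * D s) ∂volume := by
    refine setIntegral_congr_fun measurableSet_Ioc (fun s hsI => ?_)
    exact (hkey s (hIocτt hsI)).tsum_eq
  rw [hstep2]
  have hstep3 : (∫ s in Set.Ioc τ t, (-(1 / 2) * W s - (1 / 2) * D s) ∂volume)
      = -(1 / 2) * (∫ s in Set.Ioc τ t, W s ∂volume)
        - (1 / 2) * ∫ s in Set.Ioc τ t, D s ∂volume := by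
    rw [integral_sub ((hWint.const_mul _)) ((hDint.const_mul _)),
      integral_const_mul, integral_const_mul]
  rw [hstep3]
  rw [intervalIntegral.integral_of_le hτt, intervalIntegral.integral_of_le hτt]
end

section
/- Assume that initial value problems for the RBK system have unique solutions, i.e. any two mild solutions on [0,∞) with the same initial condition coincide. Let p ∈ ℕ, λ > 0, and let c be a mild solution on [0,∞) with monodisperse initial condition c_j(0) = λ if j = p and c_j(0) = 0 otherwise. Then for all t ≥ 0: c_p(t) = λ/(1 + λ a_{p,p} t) and c_j(t) = 0 for every j ≠ p. In particular, a solution starting monodisperse stays monodisperse, and {j : c_j(t) > 0} = {p} for all t ≥ 0. -/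
open MeasureTheory Filter Topology
open scoped ENNReal

noncomputable def monoSol (p : ℕ) (lam A : ℝ) : ℝ → ℕ → ℝ :=
  fun t j => if j = p then lam / (1 + lam * A * max t 0) else 0

lemma monoDenom_pos {lam A : ℝ} (hlam : 0 < lam) (hA : 0 ≤ A) (t : ℝ) :
    0 < 1 + lam * A * max t 0 := by
  have h1 : 0 ≤ max t 0 := le_max_right _ _
  have : 0 ≤ lam * A * max t 0 := by positivity
  linarith

lemma monoSol_isMild (a : ℕ → ℕ → ℝ) (hpos : ∀ j k : ℕ, 0 ≤ a (j + 1) (k + 1))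
    (q : ℕ) (lam : ℝ) (hlam : 0 < lam) :
    IsMildSolution a ⊤ (monoSol (q + 1) lam (a (q + 1) (q + 1))) := by
  set A := a (q + 1) (q + 1) with hAdef
  have hA : 0 ≤ A := hpos q q
  set f : ℝ → ℝ := fun t => lam / (1 + lam * A * max t 0) with hfdef
  have hDpos : ∀ t : ℝ, 0 < 1 + lam * A * max t 0 := monoDenom_pos hlam hA
  have hf_cont : Continuous f := by
    apply continuous_const.div
    · continuity
    · exact fun t => (hDpos t).ne'
  have hf_pos : ∀ t, 0 < f t := fun t => div_pos hlam (hDpos t)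
  have hf_le : ∀ t, f t ≤ lam := by
    intro t
    have h1 : (1:ℝ) ≤ 1 + lam * A * max t 0 := by
      have : 0 ≤ lam * A * max t 0 := by positivity
      linarith
    exact div_le_self hlam.le h1
  have hval : ∀ t j, monoSol (q + 1) lam A t (j + 1) = if j = q then f t else 0 := by
    intro t j
    simp only [monoSol, hfdef]
    by_cases h : j = q
    · simp [h]
    · rw [if_neg (by omega), if_neg h]
  constructor
  · -- mem
    intro t ht _
    constructor
    · intro j
      rw [hval]
      split
      · exact (hf_pos t).le
      · exact le_refl 0
    · apply summable_of_ne_finset_zero (s := {q})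
      intro j hj
      rw [hval, if_neg (by simpa using hj), mul_zero]
  · -- cont
    intro j
    by_cases h : j = q
    · subst h
      simp only [hval, if_pos rfl]
      exact hf_cont.continuousOn
    · have : (fun t => monoSol (q + 1) lam A t (j + 1)) = fun _ => (0:ℝ) := by
        funext t; rw [hval, if_neg h]
      rw [this]; exact continuousOn_const
  · -- bdd
    refine ⟨((q:ℝ) + 1) * lam, fun t ht _ => ?_⟩
    have : norm1 (monoSol (q + 1) lam A t) = ((q:ℝ) + 1) * f t := by
      unfold norm1
      rw [tsum_eq_single q]
      · rw [hval, if_pos rfl]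
      · intro j hj; rw [hval, if_neg hj, mul_zero]
    rw [this]
    have := hf_le t
    nlinarith [hf_pos t]
  · -- loss_summable
    intro j s _ _
    apply summable_of_ne_finset_zero (s := {q})
    intro k hk
    rw [hval, if_neg (by simpa using hk), mul_zero]
  · -- loss_integrable
    intro j t ht _
    have : (fun s => ∑' k : ℕ, a (j + 1) (k + 1) * monoSol (q + 1) lam A s (k + 1))
        = fun s => a (j + 1) (q + 1) * f s := by
      funext s
      rw [tsum_eq_single q]
      · rw [hval, if_pos rfl]
      · intro k hk; rw [hval, if_neg hk, mul_zero]
    rw [this]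
    exact (continuous_const.mul hf_cont).intervalIntegrable _ _
  · -- eqn
    intro j t ht _
    have hgain : ∀ s : ℝ,
        (∑' k : ℕ, a (j + 1 + (k + 1)) (k + 1) * monoSol (q + 1) lam A s (j + 1 + (k + 1))
          * monoSol (q + 1) lam A s (k + 1)) = 0 := by
      intro s
      have h0 : ∀ k : ℕ, a (j + 1 + (k + 1)) (k + 1) * monoSol (q + 1) lam A s (j + 1 + (k + 1))
          * monoSol (q + 1) lam A s (k + 1) = 0 := by
        intro k
        by_cases h1 : j + 1 + (k + 1) = q + 1
        · have hk : k ≠ q := by omega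
          rw [hval, if_neg hk, mul_zero]
        · have : monoSol (q + 1) lam A s (j + 1 + (k + 1)) = 0 := by
            simp only [monoSol]; rw [if_neg h1]
          rw [this, mul_zero, zero_mul]
      calc (∑' k : ℕ, a (j + 1 + (k + 1)) (k + 1) * monoSol (q + 1) lam A s (j + 1 + (k + 1))
          * monoSol (q + 1) lam A s (k + 1)) = ∑' _ : ℕ, (0:ℝ) := tsum_congr h0
        _ = 0 := tsum_zero
    by_cases hj : j = q
    · subst hj
      have hloss : ∀ s : ℝ,
          (∑' k : ℕ, a (j + 1) (k + 1) * monoSol (j + 1) lam A s (j + 1)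
            * monoSol (j + 1) lam A s (k + 1)) = A * f s * f s := by
        intro s
        rw [tsum_eq_single j]
        · simp [hval, ← hAdef]
        · intro k hk; rw [hval (j := k), if_neg hk, mul_zero]
      simp only [hgain, hloss, zero_sub]
      have hint : (∫ s in (0:ℝ)..t, -(A * f s * f s))
          = lam * (1 + lam * A * t)⁻¹ - lam := by
        have hcongr : Set.EqOn (fun s => -(A * f s * f s))
            (fun s => -(A * (lam / (1 + lam * A * s)) * (lam / (1 + lam * A * s))))
            (Set.uIcc 0 t) := by
          intro s hs
          rw [Set.uIcc_of_le ht] at hs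
          have : max s 0 = s := max_eq_left hs.1
          simp only [hfdef, this]
        rw [intervalIntegral.integral_congr hcongr]
        have hFTC : ∀ s ∈ Set.uIcc (0:ℝ) t,
            HasDerivAt (fun s => lam * (1 + lam * A * s)⁻¹)
              (-(A * (lam / (1 + lam * A * s)) * (lam / (1 + lam * A * s)))) s := by
          intro s hs
          rw [Set.uIcc_of_le ht] at hs
          have hne : 1 + lam * A * s ≠ 0 := by nlinarith [hs.1, mul_nonneg hlam.le hA]
          have hu : HasDerivAt (fun s : ℝ => 1 + lam * A * s) (lam * A) s := by
            simpa using ((hasDerivAt_id s).const_mul (lam * A)).const_add 1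
          have := (hu.inv hne).const_mul lam
          refine this.congr_deriv ?_
          field_simp
        have hInt : IntervalIntegrable
            (fun s => -(A * (lam / (1 + lam * A * s)) * (lam / (1 + lam * A * s)))) volume 0 t := by
          apply ContinuousOn.intervalIntegrable
          apply ContinuousOn.neg
          apply ContinuousOn.mul
          apply ContinuousOn.mul continuousOn_const
          all_goals
            apply ContinuousOn.div continuousOn_const (by fun_prop)
            intro s hs
            rw [Set.uIcc_of_le ht] at hs
            nlinarith [hs.1, mul_nonneg hlam.le hA]
        rw [intervalIntegral.integral_eq_sub_of_hasDerivAt hFTC hInt]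
        simp
      rw [hint, hval, hval, if_pos rfl, if_pos rfl]
      have h0 : f 0 = lam := by simp [hfdef]
      have h1 : f t = lam * (1 + lam * A * t)⁻¹ := by
        rw [hfdef]; simp [max_eq_left ht, div_eq_mul_inv]
      rw [h0, h1]; ring
    · have hloss : ∀ s : ℝ,
          (∑' k : ℕ, a (j + 1) (k + 1) * monoSol (q + 1) lam A s (j + 1)
            * monoSol (q + 1) lam A s (k + 1)) = 0 := by
        intro s
        have h0 : ∀ k : ℕ, a (j + 1) (k + 1) * monoSol (q + 1) lam A s (j + 1)
            * monoSol (q + 1) lam A s (k + 1) = 0 := by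
          intro k; rw [hval (j := j), if_neg hj, mul_zero, zero_mul]
        calc _ = ∑' _ : ℕ, (0:ℝ) := tsum_congr h0
          _ = 0 := tsum_zero
      simp only [hgain, hloss, sub_zero, intervalIntegral.integral_zero]
      rw [hval, hval, if_neg hj, if_neg hj, add_zero]

/-- assuming uniqueness of solutions to initial value problems,
a solution starting monodisperse (`c_j(0) = λ δ_{j,p}`) stays monodisperse:
`c_p(t) = λ/(1 + λ a_{p,p} t)` and `c_j(t) = 0` for `j ≠ p`; in particular
`{j : c_j(t) > 0} = {p}` for all `t ≥ 0`. -/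
theorem rbk_monodisperse
    (a : ℕ → ℕ → ℝ)
    (hsym : ∀ j k : ℕ, a (j + 1) (k + 1) = a (k + 1) (j + 1))
    (hpos : ∀ j k : ℕ, 0 ≤ a (j + 1) (k + 1))
    (huniq : ∀ c d : ℝ → ℕ → ℝ,
      IsMildSolution a ⊤ c → IsMildSolution a ⊤ d →
      (∀ j : ℕ, c 0 (j + 1) = d 0 (j + 1)) →
      ∀ t : ℝ, 0 ≤ t → ∀ j : ℕ, c t (j + 1) = d t (j + 1))
    (p : ℕ) (hp : 1 ≤ p) (lam : ℝ) (hlam : 0 < lam)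
    (c : ℝ → ℕ → ℝ) (hc : IsMildSolution a ⊤ c)
    (hinit : ∀ j : ℕ, 1 ≤ j → c 0 j = if j = p then lam else 0) :
    ∀ t : ℝ, 0 ≤ t →
      (c t p = lam / (1 + lam * a p p * t)) ∧
      (∀ j : ℕ, 1 ≤ j → j ≠ p → c t j = 0) ∧
      (∀ j : ℕ, 1 ≤ j → (0 < c t j ↔ j = p)) := by
  obtain ⟨q, rfl⟩ : ∃ q, p = q + 1 := ⟨p - 1, by omega⟩
  have hd := monoSol_isMild a hpos q lam hlam
  have hinit' : ∀ j : ℕ, c 0 (j + 1) = monoSol (q + 1) lam (a (q + 1) (q + 1)) 0 (j + 1) := by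
    intro j
    rw [hinit (j + 1) (by omega)]
    simp only [monoSol]
    by_cases h : j + 1 = q + 1
    · rw [if_pos h, if_pos h]; simp
    · rw [if_neg h, if_neg h]
  have key := huniq c _ hc hd hinit'
  intro t ht
  have hDpos : 0 < 1 + lam * a (q + 1) (q + 1) * t := by
    have := mul_nonneg (mul_nonneg hlam.le (hpos q q)) ht
    linarith
  have hcp : c t (q + 1) = lam / (1 + lam * a (q + 1) (q + 1) * t) := by
    rw [key t ht q]
    simp [monoSol, max_eq_left ht]
  refine ⟨hcp, ?_, ?_⟩
  · intro j hj hne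
    obtain ⟨m, rfl⟩ : ∃ m, j = m + 1 := ⟨j - 1, by omega⟩
    rw [key t ht m]
    simp only [monoSol]
    rw [if_neg hne]
  · intro j hj
    obtain ⟨m, rfl⟩ : ∃ m, j = m + 1 := ⟨j - 1, by omega⟩
    constructor
    · intro hpos'
      by_contra hne
      rw [key t ht m] at hpos'
      simp only [monoSol] at hpos'
      rw [if_neg hne] at hpos'
      exact lt_irrefl 0 hpos'
    · intro h
      rw [h, hcp]
      exact div_pos hlam hDpos
end

section
/- Assume a_{j,k} ≤ K·j·k for some constant K > 0 and all j,k ∈ ℕ, and assume a_{j,j} > 0 for every j ∈ ℕ. Let c be a mild solution of the RBK system on [t₀,∞) with c(t₀) = c₀ ∈ X₁⁺. Then for every j ∈ ℕ, c_j(t) → 0 as t → ∞. -/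
set_option maxHeartbeats 10000000


open MeasureTheory Filter Topology
open scoped ENNReal

/-- A (mild) solution of the RBK coagulation system on `[t₀,∞)`. -/
structure IsMildSolutionFrom (a : ℕ → ℕ → ℝ) (t₀ : ℝ) (c : ℝ → ℕ → ℝ) : Prop where
  mem : ∀ t : ℝ, t₀ ≤ t → MemX1plus (c t)
  cont : ∀ j : ℕ, ContinuousOn (fun t => c t (j + 1)) (Set.Ici t₀)
  bdd : ∃ B : ℝ, ∀ t : ℝ, t₀ ≤ t → norm1 (c t) ≤ B
  loss_summable : ∀ (j : ℕ) (s : ℝ), t₀ ≤ s →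
      Summable (fun k : ℕ => a (j + 1) (k + 1) * c s (k + 1))
  loss_integrable : ∀ (j : ℕ) (t : ℝ), t₀ ≤ t →
      IntervalIntegrable (fun s => ∑' k : ℕ, a (j + 1) (k + 1) * c s (k + 1)) volume t₀ t
  eqn : ∀ (j : ℕ) (t : ℝ), t₀ ≤ t →
      c t (j + 1) = c t₀ (j + 1) + ∫ s in t₀..t,
        ((∑' k : ℕ, a (j + 1 + (k + 1)) (k + 1) * c s (j + 1 + (k + 1)) * c s (k + 1)) -
         (∑' k : ℕ, a (j + 1) (k + 1) * c s (j + 1) * c s (k + 1)))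

/-- Auxiliary: the pair interaction term `a_{m+1,k+1} c_{m+1} c_{k+1}`. -/
private noncomputable def Gk (a : ℕ → ℕ → ℝ) (c : ℝ → ℕ → ℝ) (s : ℝ) (m k : ℕ) : ℝ :=
  a (m + 1) (k + 1) * c s (m + 1) * c s (k + 1)

/-- Auxiliary: the gain term for cluster `j+1`. -/
private noncomputable def glo (a : ℕ → ℕ → ℝ) (c : ℝ → ℕ → ℝ) (j : ℕ) (s : ℝ) : ℝ :=
  ∑' k : ℕ, Gk a c s (j + k + 1) k

/-- Auxiliary: the loss term for cluster `j+1`. -/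
private noncomputable def llo (a : ℕ → ℕ → ℝ) (c : ℝ → ℕ → ℝ) (j : ℕ) (s : ℝ) : ℝ :=
  ∑' k : ℕ, Gk a c s j k

/-- A pointwise‑summable series of a.e.-strongly measurable functions is
a.e. strongly measurable. -/
private lemma aesm_tsum_nat {μ : Measure ℝ} {f : ℕ → ℝ → ℝ}
    (hmeas : ∀ n, AEStronglyMeasurable (f n) μ)
    (hsum : ∀ᵐ x ∂μ, Summable fun n => f n x) :
    AEStronglyMeasurable (fun x => ∑' n, f n x) μ := by
  refine aestronglyMeasurable_of_tendsto_ae atTop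
    (f := fun N (x : ℝ) => ∑ n ∈ Finset.range N, f n x)
    (fun N => Finset.aestronglyMeasurable_fun_sum _ fun n _ => hmeas n) ?_
  filter_upwards [hsum] with x hx
  exact hx.hasSum.tendsto_sum_nat

/-- for `a_{j,k} ≤ K j k` with `a_{j,j} > 0` for every `j`, every
mild solution of the RBK system on `[t₀,∞)` satisfies `c_j(t) → 0` as `t → ∞`. -/
theorem rbk_long_time_decay
    (a : ℕ → ℕ → ℝ) (K : ℝ) (hK : 0 < K)
    (hsym : ∀ j k : ℕ, a (j + 1) (k + 1) = a (k + 1) (j + 1))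
    (hpos : ∀ j k : ℕ, 0 ≤ a (j + 1) (k + 1))
    (hbound : ∀ j k : ℕ, a (j + 1) (k + 1) ≤ K * ((j : ℝ) + 1) * ((k : ℝ) + 1))
    (hdiag : ∀ j : ℕ, 0 < a (j + 1) (j + 1))
    (t₀ : ℝ) (c : ℝ → ℕ → ℝ) (hc : IsMildSolutionFrom a t₀ c) :
    ∀ j : ℕ, Tendsto (fun t => c t (j + 1)) atTop (𝓝 0) := by
  classical
  obtain ⟨B, hB⟩ := hc.bdd
  have hnn : ∀ s, t₀ ≤ s → ∀ m : ℕ, 0 ≤ c s (m + 1) := fun s hs => (hc.mem s hs).1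
  have hS1 : ∀ s, t₀ ≤ s → Summable (fun m : ℕ => ((m : ℝ) + 1) * c s (m + 1)) :=
    fun s hs => (hc.mem s hs).2
  have hN0 : ∀ s, t₀ ≤ s → 0 ≤ norm1 (c s) := fun s hs =>
    tsum_nonneg fun m => mul_nonneg (by positivity) (hnn s hs m)
  have hB0 : 0 ≤ B := le_trans (hN0 t₀ le_rfl) (hB t₀ le_rfl)
  have hwb : ∀ s, t₀ ≤ s → ∀ m : ℕ, ((m : ℝ) + 1) * c s (m + 1) ≤ B := by
    intro s hs m
    exact le_trans (Summable.le_tsum (hS1 s hs) m fun j _ =>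
      mul_nonneg (by positivity) (hnn s hs j)) (hB s hs)
  have hS0 : ∀ s, t₀ ≤ s → Summable (fun m : ℕ => c s (m + 1)) := by
    intro s hs
    refine Summable.of_nonneg_of_le (hnn s hs) (fun m => ?_) (hS1 s hs)
    nlinarith [hnn s hs m, Nat.cast_nonneg (α := ℝ) m]
  -- nonnegativity and product-summability of Gk
  have hGnn : ∀ s, t₀ ≤ s → ∀ m k, 0 ≤ Gk a c s m k := fun s hs m k =>
    mul_nonneg (mul_nonneg (hpos m k) (hnn s hs m)) (hnn s hs k)
  have hGle : ∀ s, t₀ ≤ s → ∀ m k, Gk a c s m k ≤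
      (K * (((m : ℝ) + 1) * c s (m + 1))) * (((k : ℝ) + 1) * c s (k + 1)) := by
    intro s hs m k
    have h := mul_le_mul_of_nonneg_right
      (mul_le_mul_of_nonneg_right (hbound m k) (hnn s hs m)) (hnn s hs k)
    calc Gk a c s m k ≤ K * ((m : ℝ) + 1) * ((k : ℝ) + 1) * c s (m + 1) * c s (k + 1) := h
    _ = (K * (((m : ℝ) + 1) * c s (m + 1))) * (((k : ℝ) + 1) * c s (k + 1)) := by ring
  have hmajS : ∀ s, t₀ ≤ s → Summable (fun p : ℕ × ℕ =>
      (K * (((p.1 : ℝ) + 1) * c s (p.1 + 1))) * (((p.2 : ℝ) + 1) * c s (p.2 + 1))) := by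
    intro s hs
    exact Summable.mul_of_nonneg ((hS1 s hs).mul_left K) (hS1 s hs)
      (fun m => mul_nonneg hK.le (mul_nonneg (by positivity) (hnn s hs m)))
      (fun k => mul_nonneg (by positivity) (hnn s hs k))
  have hGS : ∀ s, t₀ ≤ s → Summable (fun p : ℕ × ℕ => Gk a c s p.1 p.2) := by
    intro s hs
    exact Summable.of_nonneg_of_le (fun p => hGnn s hs p.1 p.2)
      (fun p => hGle s hs p.1 p.2) (hmajS s hs)
  have hGT : ∀ s, t₀ ≤ s → (∑' p : ℕ × ℕ, Gk a c s p.1 p.2) ≤ K * B * B := by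
    intro s hs
    have h1 : (∑' p : ℕ × ℕ, Gk a c s p.1 p.2) ≤ ∑' p : ℕ × ℕ,
        (K * (((p.1 : ℝ) + 1) * c s (p.1 + 1))) * (((p.2 : ℝ) + 1) * c s (p.2 + 1)) :=
      Summable.tsum_le_tsum (fun p => hGle s hs p.1 p.2) (hGS s hs) (hmajS s hs)
    have h2 : (∑' p : ℕ × ℕ,
        (K * (((p.1 : ℝ) + 1) * c s (p.1 + 1))) * (((p.2 : ℝ) + 1) * c s (p.2 + 1)))
        = (K * norm1 (c s)) * norm1 (c s) := by
      rw [Summable.tsum_prod' (hmajS s hs) (fun m => by dsimp only; exact (hS1 s hs).mul_left _)]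
      simp_rw [tsum_mul_left, tsum_mul_right, tsum_mul_left]
      simp only [norm1]
    rw [h2] at h1
    have hNle := hB s hs
    have hNnn := hN0 s hs
    have e1 : K * norm1 (c s) * norm1 (c s) ≤ K * norm1 (c s) * B :=
      mul_le_mul_of_nonneg_left hNle (mul_nonneg hK.le hNnn)
    have e2 : K * norm1 (c s) * B ≤ K * B * B :=
      mul_le_mul_of_nonneg_right (mul_le_mul_of_nonneg_left hNle hK.le) hB0
    linarith
  -- summability of the gain and loss series
  have hgloS : ∀ s, t₀ ≤ s → ∀ j : ℕ, Summable (fun k : ℕ => Gk a c s (j + k + 1) k) := by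
    intro s hs j
    have hinj : Function.Injective (fun k : ℕ => ((j + k + 1 : ℕ), k)) := by
      intro k k' h; simpa using congrArg Prod.snd h
    exact (hGS s hs).comp_injective hinj
  have hlloS : ∀ s, t₀ ≤ s → ∀ j : ℕ, Summable (fun k : ℕ => Gk a c s j k) := by
    intro s hs j
    have hinj : Function.Injective (fun k : ℕ => ((j : ℕ), k)) := by
      intro k k' h; simpa using congrArg Prod.snd h
    exact (hGS s hs).comp_injective hinj
  have hglonn : ∀ s, t₀ ≤ s → ∀ j : ℕ, 0 ≤ glo a c j s := fun s hs j =>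
    tsum_nonneg fun k => hGnn s hs _ _
  have hllonn : ∀ s, t₀ ≤ s → ∀ j : ℕ, 0 ≤ llo a c j s := fun s hs j =>
    tsum_nonneg fun k => hGnn s hs _ _
  -- outer sums over the tail
  have houterg : ∀ (r : ℕ) (s : ℝ), t₀ ≤ s →
      HasSum (fun i : ℕ => glo a c (r + i) s)
        (∑' p : ℕ × ℕ, Gk a c s (r + p.1 + p.2 + 1) p.2) := by
    intro r s hs
    have hinj : Function.Injective (fun p : ℕ × ℕ => ((r + p.1 + p.2 + 1 : ℕ), p.2)) := by
      intro p q h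
      have h' : ((r + p.1 + p.2 + 1 : ℕ), p.2) = ((r + q.1 + q.2 + 1 : ℕ), q.2) := h
      simp only [Prod.mk.injEq] at h'
      exact Prod.ext_iff.mpr ⟨by omega, h'.2⟩
    have hF : Summable (fun p : ℕ × ℕ => Gk a c s (r + p.1 + p.2 + 1) p.2) :=
      (hGS s hs).comp_injective hinj
    exact hF.hasSum.prod_fiberwise fun i => (hgloS s hs (r + i)).hasSum
  have houterl : ∀ (r : ℕ) (s : ℝ), t₀ ≤ s →
      HasSum (fun i : ℕ => llo a c (r + i) s)
        (∑' p : ℕ × ℕ, Gk a c s (r + p.1) p.2) := by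
    intro r s hs
    have hinj : Function.Injective (fun p : ℕ × ℕ => ((r + p.1 : ℕ), p.2)) := by
      intro p q h
      have h' : ((r + p.1 : ℕ), p.2) = ((r + q.1 : ℕ), q.2) := h
      simp only [Prod.mk.injEq] at h'
      exact Prod.ext_iff.mpr ⟨by omega, h'.2⟩
    have hH : Summable (fun p : ℕ × ℕ => Gk a c s (r + p.1) p.2) :=
      (hGS s hs).comp_injective hinj
    exact hH.hasSum.prod_fiberwise fun i => (hlloS s hs (r + i)).hasSum
  -- bounds for the total gain and loss
  have hglobd : ∀ (r : ℕ) (s : ℝ), t₀ ≤ s →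
      (∑' i : ℕ, glo a c (r + i) s) ≤ K * B * B := by
    intro r s hs
    rw [(houterg r s hs).tsum_eq]
    have hinj : Function.Injective (fun p : ℕ × ℕ => ((r + p.1 + p.2 + 1 : ℕ), p.2)) := by
      intro p q h
      have h' : ((r + p.1 + p.2 + 1 : ℕ), p.2) = ((r + q.1 + q.2 + 1 : ℕ), q.2) := h
      simp only [Prod.mk.injEq] at h'
      exact Prod.ext_iff.mpr ⟨by omega, h'.2⟩
    refine le_trans (Summable.tsum_le_tsum_of_inj _ hinj (fun q _ => hGnn s hs q.1 q.2)
      (fun p => le_rfl) ((hGS s hs).comp_injective hinj) (hGS s hs)) (hGT s hs)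
  have hllobd : ∀ (r : ℕ) (s : ℝ), t₀ ≤ s →
      (∑' i : ℕ, llo a c (r + i) s) ≤ K * B * B := by
    intro r s hs
    rw [(houterl r s hs).tsum_eq]
    have hinj : Function.Injective (fun p : ℕ × ℕ => ((r + p.1 : ℕ), p.2)) := by
      intro p q h
      have h' : ((r + p.1 : ℕ), p.2) = ((r + q.1 : ℕ), q.2) := h
      simp only [Prod.mk.injEq] at h'
      exact Prod.ext_iff.mpr ⟨by omega, h'.2⟩
    refine le_trans (Summable.tsum_le_tsum_of_inj _ hinj (fun q _ => hGnn s hs q.1 q.2)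
      (fun p => le_rfl) ((hGS s hs).comp_injective hinj) (hGS s hs)) (hGT s hs)
  -- the key pointwise dissipation inequality
  have hkey : ∀ (r : ℕ) (s : ℝ), t₀ ≤ s →
      (∑' i : ℕ, glo a c (r + i) s) + Gk a c s r r ≤ ∑' i : ℕ, llo a c (r + i) s := by
    intro r s hs
    rw [(houterg r s hs).tsum_eq, (houterl r s hs).tsum_eq]
    set H : ℕ × ℕ → ℝ := fun p => Gk a c s (r + p.1) p.2 with hHdef
    have hinjH : Function.Injective (fun p : ℕ × ℕ => ((r + p.1 : ℕ), p.2)) := by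
      intro p q h
      have h' : ((r + p.1 : ℕ), p.2) = ((r + q.1 : ℕ), q.2) := h
      simp only [Prod.mk.injEq] at h'
      exact Prod.ext_iff.mpr ⟨by omega, h'.2⟩
    have hHS : Summable H := (hGS s hs).comp_injective hinjH
    have hHnn : ∀ p : ℕ × ℕ, 0 ≤ H p := fun p => hGnn s hs _ _
    have hite : ∑' p : ℕ × ℕ, H p
        = H ((0 : ℕ), r) + ∑' p : ℕ × ℕ, ite (p = ((0 : ℕ), r)) 0 (H p) :=
      Summable.tsum_eq_add_tsum_ite hHS ((0 : ℕ), r)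
    have hiteS : Summable (fun p : ℕ × ℕ => ite (p = ((0 : ℕ), r)) 0 (H p)) := by
      refine Summable.of_nonneg_of_le (fun p => ?_) (fun p => ?_) hHS
      · by_cases h : p = ((0 : ℕ), r)
        · simp [h]
        · simpa [h] using hHnn p
      · by_cases h : p = ((0 : ℕ), r)
        · simpa [h] using hHnn ((0 : ℕ), r)
        · simp [h]
    have hψinj : Function.Injective (fun p : ℕ × ℕ => ((p.1 + p.2 + 1 : ℕ), p.2)) := by
      intro p q h
      have h' : ((p.1 + p.2 + 1 : ℕ), p.2) = ((q.1 + q.2 + 1 : ℕ), q.2) := h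
      simp only [Prod.mk.injEq] at h'
      exact Prod.ext_iff.mpr ⟨by omega, h'.2⟩
    have hFS : Summable (fun p : ℕ × ℕ => Gk a c s (r + p.1 + p.2 + 1) p.2) := by
      have hinj : Function.Injective (fun p : ℕ × ℕ => ((r + p.1 + p.2 + 1 : ℕ), p.2)) := by
        intro p q h
        have h' : ((r + p.1 + p.2 + 1 : ℕ), p.2) = ((r + q.1 + q.2 + 1 : ℕ), q.2) := h
        simp only [Prod.mk.injEq] at h'
        exact Prod.ext_iff.mpr ⟨by omega, h'.2⟩
      exact (hGS s hs).comp_injective hinj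
    have hmain : (∑' p : ℕ × ℕ, Gk a c s (r + p.1 + p.2 + 1) p.2)
        ≤ ∑' p : ℕ × ℕ, ite (p = ((0 : ℕ), r)) 0 (H p) := by
      refine Summable.tsum_le_tsum_of_inj (fun p : ℕ × ℕ => ((p.1 + p.2 + 1 : ℕ), p.2)) hψinj
        (fun q hq => ?_) (fun p => ?_) hFS hiteS
      · by_cases h : q = ((0 : ℕ), r) <;> simp [h, hHnn q]
      · have hne : ((p.1 + p.2 + 1 : ℕ), p.2) ≠ ((0 : ℕ), r) := by
          intro h
          have := congrArg Prod.fst h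
          simp at this
        rw [if_neg hne]
        have heq : r + (p.1 + p.2 + 1) = r + p.1 + p.2 + 1 := by omega
        simp only [hHdef, heq]
        exact le_rfl
    have hH0 : H ((0 : ℕ), r) = Gk a c s r r := by simp [hHdef]
    rw [hite, hH0]
    linarith
  -- measurability infrastructure
  have hcontG : ∀ m k : ℕ, ContinuousOn (fun s => Gk a c s m k) (Set.Ici t₀) := by
    intro m k
    exact (continuousOn_const.mul (hc.cont m)).mul (hc.cont k)
  -- the main integral identity on [t₀, t]
  have htailS : ∀ (r : ℕ) (t : ℝ), t₀ ≤ t → Summable (fun i : ℕ => c t (r + i + 1)) := by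
    intro r t ht
    have hinj : Function.Injective (fun i : ℕ => r + i) := fun i i' h => by simpa using h
    exact (hS0 t ht).comp_injective hinj
  have hmain : ∀ (r : ℕ) (t : ℝ), t₀ ≤ t →
      (∑' i : ℕ, c t (r + i + 1)) - (∑' i : ℕ, c t₀ (r + i + 1))
        = ∫ s in t₀..t, ((∑' i : ℕ, glo a c (r + i) s) - ∑' i : ℕ, llo a c (r + i) s) := by
    intro r t ht
    have hsub : Set.Ioc t₀ t ⊆ Set.Ici t₀ := fun x hx => hx.1.le
    set μ : Measure ℝ := volume.restrict (Set.Ioc t₀ t) with hμdef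
    have haesmG : ∀ m k : ℕ, AEStronglyMeasurable (fun s => Gk a c s m k) μ := fun m k =>
      ((hcontG m k).mono hsub).aestronglyMeasurable measurableSet_Ioc
    have haegl : ∀ j : ℕ, AEStronglyMeasurable (fun s => glo a c j s) μ := by
      intro j
      refine aesm_tsum_nat (fun k => haesmG (j + k + 1) k) ?_
      filter_upwards [ae_restrict_mem measurableSet_Ioc] with s hs
      exact hgloS s hs.1.le j
    have haell : ∀ j : ℕ, AEStronglyMeasurable (fun s => llo a c j s) μ := by
      intro j
      refine aesm_tsum_nat (fun k => haesmG j k) ?_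
      filter_upwards [ae_restrict_mem measurableSet_Ioc] with s hs
      exact hlloS s hs.1.le j
    -- rewrite the j-th equation
    have heqi : ∀ i : ℕ, c t (r + i + 1) - c t₀ (r + i + 1)
        = ∫ s in Set.Ioc t₀ t, (glo a c (r + i) s - llo a c (r + i) s) := by
      intro i
      have h := hc.eqn (r + i) t ht
      have h2 : ∀ s : ℝ, (∑' k : ℕ, a ((r + i) + 1 + (k + 1)) (k + 1)
            * c s ((r + i) + 1 + (k + 1)) * c s (k + 1)) = glo a c (r + i) s := by
        intro s
        refine tsum_congr fun k => ?_
        rw [show (r + i) + 1 + (k + 1) = ((r + i) + k + 1) + 1 from by omega]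
        rfl
      have h3 : ∀ s : ℝ, (∑' k : ℕ, a ((r + i) + 1) (k + 1)
            * c s ((r + i) + 1) * c s (k + 1)) = llo a c (r + i) s := by
        intro s
        exact tsum_congr fun k => rfl
      have h4 : (fun s : ℝ => ((∑' k : ℕ, a ((r + i) + 1 + (k + 1)) (k + 1)
            * c s ((r + i) + 1 + (k + 1)) * c s (k + 1))
          - (∑' k : ℕ, a ((r + i) + 1) (k + 1) * c s ((r + i) + 1) * c s (k + 1))))
          = fun s => glo a c (r + i) s - llo a c (r + i) s :=
        funext fun s => by rw [h2 s, h3 s]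
      rw [h4] at h
      rw [intervalIntegral.integral_of_le ht] at h
      linarith
    -- the ℓ¹ bound needed for the sum/integral exchange
    have hbnd : (∑' i : ℕ, ∫⁻ s, ‖glo a c (r + i) s - llo a c (r + i) s‖₊ ∂μ) ≠ ∞ := by
      have hle : (∑' i : ℕ, ∫⁻ s, ‖glo a c (r + i) s - llo a c (r + i) s‖₊ ∂μ)
          ≤ ∑' i : ℕ, ∫⁻ s, ENNReal.ofReal (glo a c (r + i) s + llo a c (r + i) s) ∂μ := by
        refine ENNReal.tsum_le_tsum fun i => lintegral_mono_ae ?_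
        filter_upwards [ae_restrict_mem measurableSet_Ioc] with s hs
        have hs' : t₀ ≤ s := hs.1.le
        rw [← enorm_eq_nnnorm, ← ofReal_norm]
        refine ENNReal.ofReal_le_ofReal ?_
        rw [Real.norm_eq_abs]
        have h1 := hglonn s hs' (r + i)
        have h2 := hllonn s hs' (r + i)
        rw [abs_le]
        constructor <;> linarith
      have heq : (∑' i : ℕ, ∫⁻ s, ENNReal.ofReal (glo a c (r + i) s + llo a c (r + i) s) ∂μ)
          = ∫⁻ s, ∑' i : ℕ, ENNReal.ofReal (glo a c (r + i) s + llo a c (r + i) s) ∂μ := by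
        refine (lintegral_tsum fun i => ?_).symm
        exact (ENNReal.measurable_ofReal.comp_aemeasurable
          ((haegl (r + i)).add (haell (r + i))).aemeasurable)
      have hptw : (∫⁻ s, ∑' i : ℕ, ENNReal.ofReal (glo a c (r + i) s + llo a c (r + i) s) ∂μ)
          ≤ ∫⁻ _, ENNReal.ofReal (2 * (K * B * B)) ∂μ := by
        refine lintegral_mono_ae ?_
        filter_upwards [ae_restrict_mem measurableSet_Ioc] with s hs
        have hs' : t₀ ≤ s := hs.1.le
        have hsummg : Summable (fun i : ℕ => glo a c (r + i) s) := (houterg r s hs').summable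
        have hsumml : Summable (fun i : ℕ => llo a c (r + i) s) := (houterl r s hs').summable
        rw [← ENNReal.ofReal_tsum_of_nonneg
          (fun i => add_nonneg (hglonn s hs' (r + i)) (hllonn s hs' (r + i)))
          (hsummg.add hsumml)]
        refine ENNReal.ofReal_le_ofReal ?_
        rw [Summable.tsum_add hsummg hsumml]
        have := hglobd r s hs'
        have := hllobd r s hs'
        linarith
      have hconst : (∫⁻ _, ENNReal.ofReal (2 * (K * B * B)) ∂μ) < ∞ := by
        rw [lintegral_const]
        refine ENNReal.mul_lt_top ENNReal.ofReal_lt_top ?_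
        rw [hμdef, Measure.restrict_apply_univ]
        exact measure_Ioc_lt_top
      exact ((hle.trans_eq heq).trans_lt (lt_of_le_of_lt hptw hconst)).ne
    have hswap : (∫ s, (∑' i : ℕ, (glo a c (r + i) s - llo a c (r + i) s)) ∂μ)
        = ∑' i : ℕ, ∫ s, (glo a c (r + i) s - llo a c (r + i) s) ∂μ :=
      integral_tsum (fun i => (haegl (r + i)).sub (haell (r + i))) hbnd
    have hLHS : (∫ s, (∑' i : ℕ, (glo a c (r + i) s - llo a c (r + i) s)) ∂μ)
        = ∫ s in Set.Ioc t₀ t, ((∑' i : ℕ, glo a c (r + i) s) - ∑' i : ℕ, llo a c (r + i) s) := by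
      refine setIntegral_congr_fun measurableSet_Ioc fun s hs => ?_
      have hs' : t₀ ≤ s := hs.1.le
      exact Summable.tsum_sub (houterg r s hs').summable (houterl r s hs').summable
    have hRHS : (∑' i : ℕ, ∫ s, (glo a c (r + i) s - llo a c (r + i) s) ∂μ)
        = (∑' i : ℕ, c t (r + i + 1)) - (∑' i : ℕ, c t₀ (r + i + 1)) := by
      have h1 : (∑' i : ℕ, ∫ s, (glo a c (r + i) s - llo a c (r + i) s) ∂μ)
          = ∑' i : ℕ, (c t (r + i + 1) - c t₀ (r + i + 1)) :=
        tsum_congr fun i => (heqi i).symm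
      rw [h1, Summable.tsum_sub (htailS r t ht) (htailS r t₀ le_rfl)]
    rw [intervalIntegral.integral_of_le ht, ← hLHS, hswap, hRHS]
  -- interval integrability of the dissipation integrand
  have hPhiInt : ∀ (r : ℕ) (t : ℝ), t₀ ≤ t → IntervalIntegrable
      (fun s => (∑' i : ℕ, glo a c (r + i) s) - ∑' i : ℕ, llo a c (r + i) s) volume t₀ t := by
    intro r t ht
    rw [intervalIntegrable_iff, Set.uIoc_of_le ht]
    have hsub : Set.Ioc t₀ t ⊆ Set.Ici t₀ := fun x hx => hx.1.le
    have haesmG : ∀ m k : ℕ, AEStronglyMeasurable (fun s => Gk a c s m k)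
        (volume.restrict (Set.Ioc t₀ t)) := fun m k =>
      ((hcontG m k).mono hsub).aestronglyMeasurable measurableSet_Ioc
    have haegl : ∀ j : ℕ, AEStronglyMeasurable (fun s => glo a c j s)
        (volume.restrict (Set.Ioc t₀ t)) := by
      intro j
      refine aesm_tsum_nat (fun k => haesmG (j + k + 1) k) ?_
      filter_upwards [ae_restrict_mem measurableSet_Ioc] with s hs
      exact hgloS s hs.1.le j
    have haell : ∀ j : ℕ, AEStronglyMeasurable (fun s => llo a c j s)
        (volume.restrict (Set.Ioc t₀ t)) := by
      intro j
      refine aesm_tsum_nat (fun k => haesmG j k) ?_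
      filter_upwards [ae_restrict_mem measurableSet_Ioc] with s hs
      exact hlloS s hs.1.le j
    have hPg : AEStronglyMeasurable (fun s => ∑' i : ℕ, glo a c (r + i) s)
        (volume.restrict (Set.Ioc t₀ t)) := by
      refine aesm_tsum_nat (fun i => haegl (r + i)) ?_
      filter_upwards [ae_restrict_mem measurableSet_Ioc] with s hs
      exact (houterg r s hs.1.le).summable
    have hPl : AEStronglyMeasurable (fun s => ∑' i : ℕ, llo a c (r + i) s)
        (volume.restrict (Set.Ioc t₀ t)) := by
      refine aesm_tsum_nat (fun i => haell (r + i)) ?_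
      filter_upwards [ae_restrict_mem measurableSet_Ioc] with s hs
      exact (houterl r s hs.1.le).summable
    refine Integrable.mono' (integrable_const (2 * (K * B * B))) (hPg.sub hPl) ?_
    filter_upwards [ae_restrict_mem measurableSet_Ioc] with s hs
    have hs' : t₀ ≤ s := hs.1.le
    have h1 : 0 ≤ ∑' i : ℕ, glo a c (r + i) s := tsum_nonneg fun i => hglonn s hs' (r + i)
    have h2 : 0 ≤ ∑' i : ℕ, llo a c (r + i) s := tsum_nonneg fun i => hllonn s hs' (r + i)
    have h3 := hglobd r s hs'
    have h4 := hllobd r s hs'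
    rw [Real.norm_eq_abs, abs_le]
    constructor <;> linarith
  -- the dissipation step inequality
  have hstep : ∀ (r : ℕ) (u t : ℝ), t₀ ≤ u → u ≤ t →
      (∑' i : ℕ, c t (r + i + 1)) + a (r + 1) (r + 1) * ∫ σ in u..t, (c σ (r + 1)) ^ 2
        ≤ ∑' i : ℕ, c u (r + i + 1) := by
    intro r u t hu hut
    have ht : t₀ ≤ t := hu.trans hut
    have h1 := hmain r t ht
    have h2 := hmain r u hu
    have hii : IntervalIntegrable
        (fun s => (∑' i : ℕ, glo a c (r + i) s) - ∑' i : ℕ, llo a c (r + i) s) volume u t := by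
      refine (hPhiInt r t ht).mono_set ?_
      rw [Set.uIcc_of_le hut, Set.uIcc_of_le ht]
      exact Set.Icc_subset_Icc hu le_rfl
    have hadd := intervalIntegral.integral_add_adjacent_intervals (hPhiInt r u hu) hii
    have hcsq : IntervalIntegrable (fun σ => a (r + 1) (r + 1) * (c σ (r + 1)) ^ 2) volume u t := by
      refine ContinuousOn.intervalIntegrable ?_
      have hsub2 : Set.uIcc u t ⊆ Set.Ici t₀ := by
        rw [Set.uIcc_of_le hut]
        exact fun x hx => hu.trans hx.1
      exact continuousOn_const.mul (((hc.cont r).mono hsub2).pow 2)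
    have hmono2 : (∫ σ in u..t, ((∑' i : ℕ, glo a c (r + i) σ) - ∑' i : ℕ, llo a c (r + i) σ))
        ≤ ∫ σ in u..t, (-(a (r + 1) (r + 1) * (c σ (r + 1)) ^ 2)) := by
      refine intervalIntegral.integral_mono_on hut hii hcsq.neg fun σ hσ => ?_
      have hσ' : t₀ ≤ σ := hu.trans hσ.1
      have hk := hkey r σ hσ'
      have hGrr : Gk a c σ r r = a (r + 1) (r + 1) * (c σ (r + 1)) ^ 2 := by
        rw [Gk]; ring
      rw [hGrr] at hk
      linarith
    rw [intervalIntegral.integral_neg] at hmono2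
    have hpull : (∫ σ in u..t, a (r + 1) (r + 1) * (c σ (r + 1)) ^ 2)
        = a (r + 1) (r + 1) * ∫ σ in u..t, (c σ (r + 1)) ^ 2 :=
      intervalIntegral.integral_const_mul _ _
    rw [hpull] at hmono2
    linarith
  -- monotonicity of tails
  have hmono : ∀ (r : ℕ) (u t : ℝ), t₀ ≤ u → u ≤ t →
      (∑' i : ℕ, c t (r + i + 1)) ≤ ∑' i : ℕ, c u (r + i + 1) := by
    intro r u t hu hut
    have h := hstep r u t hu hut
    have hnn2 : 0 ≤ ∫ σ in u..t, (c σ (r + 1)) ^ 2 :=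
      intervalIntegral.integral_nonneg hut fun σ _ => sq_nonneg _
    nlinarith [(hdiag r).le]
  have htail_nn : ∀ (r : ℕ) (t : ℝ), t₀ ≤ t → 0 ≤ ∑' i : ℕ, c t (r + i + 1) :=
    fun r t ht => tsum_nonneg fun i => hnn t ht _
  have htail_le : ∀ (r : ℕ) (t : ℝ), t₀ ≤ t → (∑' i : ℕ, c t (r + i + 1)) ≤ B := by
    intro r t ht
    have hinj : Function.Injective (fun i : ℕ => r + i) := fun i i' h => by simpa using h
    refine le_trans (Summable.tsum_le_tsum_of_inj (fun i : ℕ => r + i) hinj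
      (fun m _ => mul_nonneg (by positivity) (hnn t ht m)) (fun i => ?_)
      (htailS r t ht) (hS1 t ht)) (hB t ht)
    have := hnn t ht (r + i)
    have hcast : (0:ℝ) ≤ ((r + i : ℕ) : ℝ) := Nat.cast_nonneg _
    nlinarith
  -- convergence of the tails
  have hlim : ∀ r : ℕ, ∃ L : ℝ, Tendsto (fun t => ∑' i : ℕ, c t (r + i + 1)) atTop (𝓝 L) := by
    intro r
    set g : ℝ → ℝ := fun t => ∑' i : ℕ, c (max t t₀) (r + i + 1) with hgdef
    have hga : Antitone g := by
      intro u v huv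
      exact hmono r (max u t₀) (max v t₀) (le_max_right _ _) (max_le_max huv le_rfl)
    have hgb : BddBelow (Set.range g) := by
      refine ⟨0, fun x hx => ?_⟩
      obtain ⟨t, rfl⟩ := hx
      exact htail_nn r _ (le_max_right _ _)
    refine ⟨⨅ t, g t, (tendsto_atTop_ciInf hga hgb).congr' ?_⟩
    filter_upwards [eventually_ge_atTop t₀] with t ht
    simp only [hgdef, max_eq_left ht]
  choose L hL using hlim
  -- convergence of c_j
  have hsplit : ∀ (r : ℕ) (t : ℝ), t₀ ≤ t →
      (∑' i : ℕ, c t (r + i + 1)) = c t (r + 1) + ∑' i : ℕ, c t ((r + 1) + i + 1) := by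
    intro r t ht
    rw [Summable.tsum_eq_zero_add (htailS r t ht)]
    congr 1
    exact tsum_congr fun i => by rw [show r + (i + 1) + 1 = (r + 1) + i + 1 from by omega]
  have hclim : ∀ r : ℕ, Tendsto (fun t => c t (r + 1)) atTop (𝓝 (L r - L (r + 1))) := by
    intro r
    refine ((hL r).sub (hL (r + 1))).congr' ?_
    filter_upwards [eventually_ge_atTop t₀] with t ht
    have := hsplit r t ht
    linarith
  intro j
  have hle0 : 0 ≤ L j - L (j + 1) := by
    refine ge_of_tendsto (hclim j) ?_
    filter_upwards [eventually_ge_atTop t₀] with t ht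
    exact hnn t ht j
  by_cases hzero : L j - L (j + 1) = 0
  · exact hzero ▸ hclim j
  · exfalso
    have hpos' : 0 < L j - L (j + 1) := lt_of_le_of_ne hle0 (Ne.symm hzero)
    set ℓ : ℝ := L j - L (j + 1) with hℓdef
    have hev : ∀ᶠ t in atTop, ℓ / 2 ≤ c t (j + 1) :=
      (hclim j).eventually (eventually_ge_nhds (by linarith))
    obtain ⟨T, hT⟩ := (hev.and (eventually_ge_atTop t₀)).exists_forall_of_atTop
    have hTt₀ : t₀ ≤ T := (hT T le_rfl).2
    have key : ∀ t, T ≤ t → a (j + 1) (j + 1) * ((ℓ / 2) ^ 2 * (t - T)) ≤ B := by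
      intro t htT
      have h1 := hstep j T t hTt₀ htT
      have h2 : (ℓ / 2) ^ 2 * (t - T) ≤ ∫ σ in T..t, (c σ (j + 1)) ^ 2 := by
        have hconst : (∫ σ in T..t, (ℓ / 2) ^ 2) = (t - T) * (ℓ / 2) ^ 2 := by
          rw [intervalIntegral.integral_const, smul_eq_mul]
        have hsqint : IntervalIntegrable (fun σ => (c σ (j + 1)) ^ 2) volume T t := by
          refine ContinuousOn.intervalIntegrable ?_
          have hsub2 : Set.uIcc T t ⊆ Set.Ici t₀ := by
            rw [Set.uIcc_of_le htT]
            exact fun x hx => hTt₀.trans hx.1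
          exact ((hc.cont j).mono hsub2).pow 2
        have hm : (∫ _σ in T..t, (ℓ / 2) ^ 2) ≤ ∫ σ in T..t, (c σ (j + 1)) ^ 2 := by
          refine intervalIntegral.integral_mono_on htT intervalIntegrable_const hsqint
            fun σ hσ => ?_
          have hσT := (hT σ hσ.1).1
          have h0 : (0:ℝ) ≤ ℓ / 2 := by linarith
          exact pow_le_pow_left₀ h0 hσT 2
        rw [hconst] at hm
        linarith
      have h3 := htail_nn j t (hTt₀.trans htT)
      have h4 := htail_le j T hTt₀
      have h5 : a (j + 1) (j + 1) * ((ℓ / 2) ^ 2 * (t - T))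
          ≤ a (j + 1) (j + 1) * ∫ σ in T..t, (c σ (j + 1)) ^ 2 :=
        mul_le_mul_of_nonneg_left h2 (hdiag j).le
      linarith
    set A : ℝ := a (j + 1) (j + 1) * (ℓ / 2) ^ 2 with hAdef
    have hApos : 0 < A := mul_pos (hdiag j) (by positivity)
    have hfin := key (T + (B + 1) / A)
      (le_add_of_nonneg_right (div_nonneg (by linarith) hApos.le))
    have hcalc : a (j + 1) (j + 1) * ((ℓ / 2) ^ 2 * ((T + (B + 1) / A) - T)) = B + 1 := by
      have h1 : a (j + 1) (j + 1) * ((ℓ / 2) ^ 2 * ((T + (B + 1) / A) - T))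
          = (B + 1) / A * A := by rw [hAdef]; ring
      rw [h1, div_mul_cancel₀ _ hApos.ne']
    rw [hcalc] at hfin
    linarith
end
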